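/- arXiv:1406.7443 — 5 statements merged into one kernel-verified Lean document; each statement's English description precedes it below -/
import Mathlib

section
/- Fix d, n, K ∈ ℕ with K ≥ 1 and λ, σ > 0. For each episode t = 1,…,n let φ_{t,1},…,φ_{t,m_t} ∈ ℝ^d be feature vectors with m_t ≤ K and ‖φ_{t,k}‖₂ ≤ 1 for all k, and define the positive definite matrices Σ_t ∈ ℝ^{d×d} by Σ_t^{-1} = (1/λ²) I + (1/σ²) Σ_{τ=1}^{t-1} Σ_{k=1}^{m_τ} φ_{τ,k} φ_{τ,k}ᵀ. Then Σ_{t=1}^n Σ_{k=1}^{m_t} φ_{t,k}ᵀ Σ_t φ_{t,k} ≤ d K λ² · ln(1 + nKλ²/(dσ²)) / ln(1 + λ²/σ²). -/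
open Matrix Finset RealInnerProductSpace

open scoped MatrixOrder in
noncomputable def Matrix.PosSemidef.sqrt {d : ℕ} {A : Matrix (Fin d) (Fin d) ℝ} (_ : A.PosSemidef) :
    Matrix (Fin d) (Fin d) ℝ := CFC.sqrt A

open scoped MatrixOrder in
lemma Matrix.PosSemidef.sqrt_mul_self {d : ℕ} {A : Matrix (Fin d) (Fin d) ℝ} (hA : A.PosSemidef) :
    hA.sqrt * hA.sqrt = A := CFC.sqrt_mul_sqrt_self A hA.nonneg

open scoped MatrixOrder in
lemma Matrix.PosSemidef.posSemidef_sqrt {d : ℕ} {A : Matrix (Fin d) (Fin d) ℝ} (hA : A.PosSemidef) :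
    hA.sqrt.PosSemidef := (CFC.sqrt_nonneg A).posSemidef

namespace Stmt7

variable {d : ℕ}

lemma psd_outer (v : Fin d → ℝ) : (vecMulVec v v).PosSemidef := by
  refine Matrix.PosSemidef.of_dotProduct_mulVec_nonneg ?_ ?_
  · ext i j
    simp [vecMulVec_apply, conjTranspose_apply, mul_comm]
  · intro x
    have h : star x ⬝ᵥ (vecMulVec v v) *ᵥ x = (v ⬝ᵥ x) * (v ⬝ᵥ x) := by
      simp [vecMulVec, mulVec, dotProduct, Finset.mul_sum, Finset.sum_mul, mul_comm,
        mul_left_comm, mul_assoc]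
    rw [h]
    exact mul_self_nonneg _

lemma psd_smul {M : Matrix (Fin d) (Fin d) ℝ} (hM : M.PosSemidef) {c : ℝ} (hc : 0 ≤ c) :
    (c • M).PosSemidef := by
  refine Matrix.PosSemidef.of_dotProduct_mulVec_nonneg ?_ ?_
  · unfold Matrix.IsHermitian
    rw [conjTranspose_smul]
    simp only [star_trivial]
    rw [hM.1.eq]
  · intro x
    rw [smul_mulVec, dotProduct_smul, smul_eq_mul]
    exact mul_nonneg hc (hM.dotProduct_mulVec_nonneg x)

lemma psd_sum {ι : Type*} (s : Finset ι) (f : ι → Matrix (Fin d) (Fin d) ℝ)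
    (h : ∀ i ∈ s, (f i).PosSemidef) : (∑ i ∈ s, f i).PosSemidef := by
  classical
  induction s using Finset.induction_on with
  | empty => simpa using Matrix.PosSemidef.zero
  | @insert a s' hni ih =>
    rw [Finset.sum_insert hni]
    exact (h a (Finset.mem_insert_self a s')).add (ih fun i hi => h i (Finset.mem_insert_of_mem hi))

lemma pd_smul_one {c : ℝ} (hc : 0 < c) : (c • (1 : Matrix (Fin d) (Fin d) ℝ)).PosDef := by
  have h : (c • (1 : Matrix (Fin d) (Fin d) ℝ)) = diagonal (fun _ => c) := by
    ext i j; by_cases hij : i = j <;> simp [hij, Matrix.one_apply, diagonal_apply]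
  rw [h]
  exact Matrix.posDef_diagonal_iff.mpr fun i => hc

lemma one_le_det_one_add {M : Matrix (Fin d) (Fin d) ℝ} (hM : M.PosSemidef) :
    1 ≤ (1 + M).det := by
  have h1 : (1 + M).PosSemidef := Matrix.PosSemidef.add (Matrix.PosSemidef.one) hM
  have hH : (1 + M).IsHermitian := h1.isHermitian
  rw [hH.det_eq_prod_eigenvalues]
  have key : ∀ i, 1 ≤ hH.eigenvalues i := by
    intro i
    rw [hH.eigenvalues_eq]
    set v : Fin d → ℝ := ⇑(hH.eigenvectorBasis i) with hv
    have hnorm : v ⬝ᵥ v = 1 := by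
      have h := hH.eigenvectorBasis.orthonormal.1 i
      have h2 : (inner ℝ (hH.eigenvectorBasis i) (hH.eigenvectorBasis i) : ℝ) = 1 := by
        rw [real_inner_self_eq_norm_sq, h]; norm_num
      rw [← h2]
      simp only [PiLp.inner_apply, RCLike.inner_apply, starRingEnd_apply, star_trivial,
        dotProduct]
      rfl
    have hquad : 0 ≤ v ⬝ᵥ M *ᵥ v := hM.dotProduct_mulVec_nonneg v
    have hexp : star v ⬝ᵥ (1 + M) *ᵥ v = v ⬝ᵥ v + v ⬝ᵥ M *ᵥ v := by
      simp [Matrix.add_mulVec, dotProduct_add]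
    rw [hexp]
    simp only [RCLike.re_to_real]
    linarith [hnorm]
  have h2 : (1:ℝ) ≤ ∏ i, hH.eigenvalues i :=
    calc (1:ℝ) = ∏ _i : Fin d, 1 := by simp
    _ ≤ ∏ i, hH.eigenvalues i := Finset.prod_le_prod (by simp) (by intro i _; exact key i)
  exact_mod_cast h2

lemma sandwich {A : Matrix (Fin d) (Fin d) ℝ} (hA : A.PosDef) (B : Matrix (Fin d) (Fin d) ℝ) :
    A + B = hA.posSemidef.sqrt * (1 + hA.posSemidef.sqrt⁻¹ * B * hA.posSemidef.sqrt⁻¹) *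
      hA.posSemidef.sqrt := by
  set S := hA.posSemidef.sqrt with hS
  have hSS : S * S = A := hA.posSemidef.sqrt_mul_self
  have hdet : IsUnit S.det := by
    have h : S.det * S.det = A.det := by rw [← det_mul, hSS]
    have : S.det ≠ 0 := by
      intro h0; rw [h0, mul_zero] at h; exact (hA.det_pos.ne' h.symm).elim
    exact isUnit_iff_ne_zero.mpr this
  rw [Matrix.mul_add, Matrix.add_mul, Matrix.mul_one, hSS]
  congr 1
  rw [← Matrix.mul_assoc, ← Matrix.mul_assoc, Matrix.mul_nonsing_inv _ hdet, Matrix.one_mul,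
    Matrix.mul_assoc, Matrix.nonsing_inv_mul _ hdet, Matrix.mul_one]

lemma conj_psd {A B : Matrix (Fin d) (Fin d) ℝ} (hA : A.PosDef) (hB : B.PosSemidef) :
    (hA.posSemidef.sqrt⁻¹ * B * hA.posSemidef.sqrt⁻¹).PosSemidef := by
  have h := hB.mul_mul_conjTranspose_same hA.posSemidef.sqrt⁻¹
  have hsym : (hA.posSemidef.sqrt⁻¹)ᴴ = hA.posSemidef.sqrt⁻¹ := by
    rw [conjTranspose_nonsing_inv, hA.posSemidef.posSemidef_sqrt.isHermitian.eq]
  rwa [hsym] at h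

lemma det_le_det_add {A B : Matrix (Fin d) (Fin d) ℝ} (hA : A.PosDef) (hB : B.PosSemidef) :
    A.det ≤ (A + B).det := by
  set S := hA.posSemidef.sqrt with hS
  have hSS : S * S = A := hA.posSemidef.sqrt_mul_self
  have hdetSS : S.det * S.det = A.det := by rw [← det_mul, hSS]
  rw [sandwich hA B, det_mul, det_mul]
  have h1 : 1 ≤ (1 + S⁻¹ * B * S⁻¹).det := one_le_det_one_add (conj_psd hA hB)
  nlinarith [hA.det_pos, h1]

lemma det_outer_eq {A : Matrix (Fin d) (Fin d) ℝ} (hA : A.PosDef) (v : Fin d → ℝ) :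
    (A + vecMulVec v v).det = A.det * (1 + v ⬝ᵥ A⁻¹ *ᵥ v) := by
  set S := hA.posSemidef.sqrt with hS
  have hSS : S * S = A := hA.posSemidef.sqrt_mul_self
  have hdetSS : S.det * S.det = A.det := by rw [← det_mul, hSS]
  have hsym : S⁻¹ᵀ = S⁻¹ := by
    rw [Matrix.transpose_nonsing_inv]
    congr 1
    exact hA.posSemidef.posSemidef_sqrt.isHermitian.eq
  rw [sandwich hA (vecMulVec v v), det_mul, det_mul]
  set w := S⁻¹ *ᵥ v with hw
  have key : S⁻¹ * vecMulVec v v * S⁻¹ = Matrix.replicateCol Unit w * Matrix.replicateRow Unit w := by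
    rw [vecMulVec_eq Unit, ← Matrix.mul_assoc, Matrix.mul_assoc _ _ (S⁻¹), ← Matrix.replicateCol_mulVec]
    congr 1
    rw [← Matrix.replicateRow_vecMul]
    congr 1
    rw [hw]
    conv_lhs => rw [← hsym]
    rw [Matrix.vecMul_transpose]
  rw [key]
  rw [Matrix.det_one_add_replicateCol_mul_replicateRow w w]
  have hww : w ⬝ᵥ w = v ⬝ᵥ A⁻¹ *ᵥ v := by
    rw [hw]
    rw [show (S⁻¹ *ᵥ v) ⬝ᵥ (S⁻¹ *ᵥ v) = v ᵥ* S⁻¹ᵀ ⬝ᵥ (S⁻¹ *ᵥ v) by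
      rw [Matrix.vecMul_transpose]]
    rw [hsym, ← Matrix.dotProduct_mulVec, Matrix.mulVec_mulVec, ← Matrix.mul_inv_rev, hSS]
  rw [hww, ← hdetSS]; ring

lemma det_mul_one_add_le {A B : Matrix (Fin d) (Fin d) ℝ} (hA : A.PosDef) (v : Fin d → ℝ)
    (hle : (B - vecMulVec v v).PosSemidef) :
    A.det * (1 + v ⬝ᵥ A⁻¹ *ᵥ v) ≤ (A + B).det := by
  have h1 : A + B = (A + vecMulVec v v) + (B - vecMulVec v v) := by abel
  have h2 : (A + vecMulVec v v).PosDef := hA.add_posSemidef (psd_outer v)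
  calc A.det * (1 + v ⬝ᵥ A⁻¹ *ᵥ v) = (A + vecMulVec v v).det := (det_outer_eq hA v).symm
    _ ≤ ((A + vecMulVec v v) + (B - vecMulVec v v)).det := det_le_det_add h2 hle
    _ = (A + B).det := by rw [← h1]

lemma quad_le_of_shift {A : Matrix (Fin d) (Fin d) ℝ} (hA : A.PosDef) {c : ℝ} (hc : 0 < c)
    (hsh : (A - c⁻¹ • (1 : Matrix (Fin d) (Fin d) ℝ)).PosSemidef) (v : Fin d → ℝ)
    (hv : v ⬝ᵥ v ≤ 1) :
    v ⬝ᵥ A⁻¹ *ᵥ v ≤ c := by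
  set ψ := A⁻¹ *ᵥ v with hψ
  have hAψ : A *ᵥ ψ = v := by
    rw [hψ, Matrix.mulVec_mulVec, Matrix.mul_nonsing_inv _ hA.det_pos.ne'.isUnit,
      Matrix.one_mulVec]
  have hlow : c⁻¹ * (ψ ⬝ᵥ ψ) ≤ ψ ⬝ᵥ v := by
    have h := hsh.dotProduct_mulVec_nonneg ψ
    simp only [star_trivial, Matrix.sub_mulVec, Matrix.smul_mulVec, Matrix.one_mulVec,
      dotProduct_sub, dotProduct_smul, smul_eq_mul, hAψ] at h
    linarith
  have hs0 : 0 ≤ v ⬝ᵥ ψ := by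
    have h := (hA.posSemidef.inv).dotProduct_mulVec_nonneg v
    simpa using h
  have hsymdot : ψ ⬝ᵥ v = v ⬝ᵥ ψ := dotProduct_comm _ _
  have hcs : (ψ ⬝ᵥ v) ^ 2 ≤ (ψ ⬝ᵥ ψ) * (v ⬝ᵥ v) := by
    have := Finset.sum_mul_sq_le_sq_mul_sq Finset.univ ψ v
    simpa [dotProduct, pow_two] using this
  have hpp : 0 ≤ ψ ⬝ᵥ ψ := by
    have h : ψ ⬝ᵥ ψ = ∑ i, ψ i * ψ i := rfl
    rw [h]; exact Finset.sum_nonneg fun i _ => mul_self_nonneg _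
  have hvv : 0 ≤ v ⬝ᵥ v := by
    have h : v ⬝ᵥ v = ∑ i, v i * v i := rfl
    rw [h]; exact Finset.sum_nonneg fun i _ => mul_self_nonneg _
  have hpc : ψ ⬝ᵥ ψ ≤ c * (v ⬝ᵥ ψ) := by
    have h := mul_le_mul_of_nonneg_left hlow hc.le
    rwa [← mul_assoc, mul_inv_cancel₀ hc.ne', one_mul, hsymdot] at h
  have h2 : (v ⬝ᵥ ψ) ^ 2 ≤ c * (v ⬝ᵥ ψ) := by nlinarith [hcs, hpc, hvv, hpp]
  rcases eq_or_lt_of_le hs0 with h | h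
  · linarith [hc]
  · nlinarith [h2, h]

lemma logdet_le_trace (hd : 0 < d) {M : Matrix (Fin d) (Fin d) ℝ} (hM : M.PosDef) :
    Real.log M.det ≤ d * Real.log (M.trace / d) := by
  have hH := hM.isHermitian
  have heig : ∀ i, 0 < hH.eigenvalues i := hM.eigenvalues_pos
  have hdet : M.det = ∏ i, hH.eigenvalues i := by
    rw [hH.det_eq_prod_eigenvalues]; norm_num
  have htr : M.trace = ∑ i, hH.eigenvalues i := by
    conv_lhs => rw [hH.spectral_theorem]
    rw [Unitary.conjStarAlgAut_apply]
    rw [Matrix.trace_mul_cycle]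
    rw [Unitary.coe_star_mul_self, Matrix.one_mul, Matrix.trace_diagonal]
    simp
  rw [hdet, htr]
  rw [Real.log_prod (fun i _ => (heig i).ne')]
  have hjen := (strictConcaveOn_log_Ioi.concaveOn).le_map_sum
    (t := Finset.univ) (w := fun _ : Fin d => (d : ℝ)⁻¹) (p := fun i => hH.eigenvalues i)
    (by intro i _; positivity)
    (by simp [Finset.card_univ]; field_simp)
    (by intro i _; exact heig i)
  simp only [smul_eq_mul] at hjen
  have hd0 : (0:ℝ) < d := by exact_mod_cast hd
  have h1 : ∑ i, (d : ℝ)⁻¹ * Real.log (hH.eigenvalues i)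
      = (d : ℝ)⁻¹ * ∑ i, Real.log (hH.eigenvalues i) := by rw [Finset.mul_sum]
  have h2 : ∑ i, (d : ℝ)⁻¹ * hH.eigenvalues i = (∑ i, hH.eigenvalues i) / d := by
    rw [← Finset.mul_sum]; ring
  rw [h1, h2] at hjen
  calc ∑ i, Real.log (hH.eigenvalues i)
      = d * ((d : ℝ)⁻¹ * ∑ i, Real.log (hH.eigenvalues i)) := by field_simp
    _ ≤ d * Real.log ((∑ i, hH.eigenvalues i) / d) := by
        exact mul_le_mul_of_nonneg_left hjen (le_of_lt hd0)

lemma chord {lam σ s : ℝ} (hlam : 0 < lam) (hσ : 0 < σ) (hs0 : 0 ≤ s) (hs : s ≤ lam ^ 2) :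
    s * Real.log (1 + lam ^ 2 / σ ^ 2) ≤ lam ^ 2 * Real.log (1 + s / σ ^ 2) := by
  set a := s / lam ^ 2 with ha
  have hl2 : (0:ℝ) < lam ^ 2 := by positivity
  have ha0 : 0 ≤ a := by positivity
  have ha1 : a ≤ 1 := by rw [ha]; exact (div_le_one hl2).mpr hs
  have hx : (1 + lam ^ 2 / σ ^ 2) ∈ Set.Ioi (0:ℝ) := by
    simp only [Set.mem_Ioi]; positivity
  have hy : (1:ℝ) ∈ Set.Ioi (0:ℝ) := by norm_num
  have hcomb := (strictConcaveOn_log_Ioi.concaveOn).2 hx hy ha0 (by linarith)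
    (by ring : a + (1 - a) = 1)
  simp only [smul_eq_mul, Real.log_one, mul_zero, add_zero, mul_one] at hcomb
  have harg : a * (1 + lam ^ 2 / σ ^ 2) + (1 - a) = 1 + s / σ ^ 2 := by
    rw [ha]; field_simp; ring
  rw [harg] at hcomb
  have hmul := mul_le_mul_of_nonneg_left hcomb (le_of_lt hl2)
  calc s * Real.log (1 + lam ^ 2 / σ ^ 2) = lam ^ 2 * (a * Real.log (1 + lam ^ 2 / σ ^ 2)) := by
        rw [ha]; field_simp
    _ ≤ lam ^ 2 * Real.log (1 + s / σ ^ 2) := hmul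

end Stmt7

open Stmt7

/-- worst-case bound on the sum of squared confidence widths. With
Σ_t⁻¹ = (1/λ²) I + (1/σ²) Σ_{τ<t} Σ_k φ_{τ,k} φ_{τ,k}ᵀ, m_t ≤ K, ‖φ_{t,k}‖₂ ≤ 1:
Σ_{t=1}^n Σ_{k=1}^{m_t} φ_{t,k}ᵀ Σ_t φ_{t,k}
  ≤ d K λ² ln(1 + nKλ²/(dσ²)) / ln(1 + λ²/σ²). -/
theorem stmt_7 {d n K : ℕ} (hd : 0 < d) (hK : 1 ≤ K) (lam σ : ℝ)
    (hlam : 0 < lam) (hσ : 0 < σ)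
    (m : Fin n → ℕ) (hm : ∀ t, m t ≤ K)
    (φ : (t : Fin n) → Fin (m t) → Fin d → ℝ)
    (hφ : ∀ t k, Real.sqrt (φ t k ⬝ᵥ φ t k) ≤ 1)
    (Sig : Fin n → Matrix (Fin d) (Fin d) ℝ)
    (hSig : ∀ t, Sig t =
      ((lam ^ 2)⁻¹ • (1 : Matrix (Fin d) (Fin d) ℝ) +
        (σ ^ 2)⁻¹ • ∑ τ ∈ Finset.Iio t, ∑ k, vecMulVec (φ τ k) (φ τ k))⁻¹) :
    ∑ t, ∑ k, φ t k ⬝ᵥ (Sig t).mulVec (φ t k) ≤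
      d * K * lam ^ 2 * Real.log (1 + n * K * lam ^ 2 / (d * σ ^ 2)) /
        Real.log (1 + lam ^ 2 / σ ^ 2) := by
  classical
  have hl2 : (0:ℝ) < lam ^ 2 := by positivity
  have hs2 : (0:ℝ) < σ ^ 2 := by positivity
  have hd0 : (0:ℝ) < d := by exact_mod_cast hd
  set B : Fin n → Matrix (Fin d) (Fin d) ℝ := fun τ => ∑ k, vecMulVec (φ τ k) (φ τ k) with hB
  set A : ℕ → Matrix (Fin d) (Fin d) ℝ := fun t =>
    (lam ^ 2)⁻¹ • 1 + (σ ^ 2)⁻¹ • ∑ τ ∈ Finset.univ.filter (fun τ : Fin n => (τ : ℕ) < t), B τ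
    with hA
  have hBpsd : ∀ τ, (B τ).PosSemidef := fun τ =>
    psd_sum _ _ (fun k _ => psd_outer _)
  have hsumpsd : ∀ t : ℕ,
      (∑ τ ∈ Finset.univ.filter (fun τ : Fin n => (τ : ℕ) < t), B τ).PosSemidef := fun t =>
    psd_sum _ _ (fun τ _ => hBpsd τ)
  have hApd : ∀ t : ℕ, (A t).PosDef := fun t =>
    (pd_smul_one (inv_pos.mpr hl2)).add_posSemidef (psd_smul (hsumpsd t) (inv_pos.mpr hs2).le)
  have hshift : ∀ t : ℕ,
      ((A t) - ((lam ^ 2)⁻¹ • (1 : Matrix (Fin d) (Fin d) ℝ))).PosSemidef := by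
    intro t
    have h : (A t) - (lam ^ 2)⁻¹ • (1 : Matrix (Fin d) (Fin d) ℝ)
        = (σ ^ 2)⁻¹ • ∑ τ ∈ Finset.univ.filter (fun τ : Fin n => (τ : ℕ) < t), B τ := by
      rw [hA, add_sub_cancel_left]
    rw [h]
    exact psd_smul (hsumpsd t) (inv_pos.mpr hs2).le
  have hSig' : ∀ t : Fin n, Sig t = (A t.val)⁻¹ := by
    intro t
    rw [hSig t, hA]
    congr 3
    apply Finset.sum_congr _ (fun τ _ => rfl)
    ext τ
    simp only [Finset.mem_Iio, Finset.mem_filter, Finset.mem_univ, true_and, Fin.lt_def]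
  have hφ1 : ∀ t k, φ t k ⬝ᵥ φ t k ≤ 1 := by
    intro t k
    have h1 := hφ t k
    have h0 : 0 ≤ φ t k ⬝ᵥ φ t k :=
      Finset.sum_nonneg fun i _ => mul_self_nonneg _
    nlinarith [Real.sq_sqrt h0, Real.sqrt_nonneg (φ t k ⬝ᵥ φ t k)]
  -- abbreviation for the quadratic forms
  set s : (t : Fin n) → Fin (m t) → ℝ := fun t k => φ t k ⬝ᵥ (A t.val)⁻¹ *ᵥ φ t k with hsdef
  have hs0 : ∀ t k, 0 ≤ s t k := by
    intro t k
    have h := ((hApd t.val).posSemidef.inv).dotProduct_mulVec_nonneg (φ t k)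
    simpa using h
  have hsle : ∀ t k, s t k ≤ lam ^ 2 := by
    intro t k
    exact quad_le_of_shift (hApd t.val) hl2 (by simpa using hshift t.val) (φ t k) (hφ1 t k)
  -- step identity
  have hstep : ∀ t : Fin n, A (t.val + 1) = A t.val + (σ ^ 2)⁻¹ • B t := by
    intro t
    have hnot : t ∉ Finset.univ.filter (fun τ : Fin n => (τ : ℕ) < t.val) := by simp
    have hfil : Finset.univ.filter (fun τ : Fin n => (τ : ℕ) < t.val + 1)
        = insert t (Finset.univ.filter (fun τ : Fin n => (τ : ℕ) < t.val)) := by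
      ext τ
      simp [Nat.lt_succ_iff_lt_or_eq, Fin.ext_iff, or_comm, le_iff_eq_or_lt]
    rw [hA]
    simp only
    rw [hfil, Finset.sum_insert hnot, smul_add]
    abel
  -- determinant step inequality
  have hdetpos : ∀ t : ℕ, 0 < (A t).det := fun t => (hApd t).det_pos
  have hdetstep : ∀ (t : Fin n) (k : Fin (m t)),
      Real.log (1 + (σ ^ 2)⁻¹ * s t k)
        ≤ Real.log ((A (t.val + 1)).det) - Real.log ((A t.val).det) := by
    intro t k
    set r : ℝ := Real.sqrt ((σ ^ 2)⁻¹) with hr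
    have hrr : r * r = (σ ^ 2)⁻¹ := Real.mul_self_sqrt (inv_pos.mpr hs2).le
    set v : Fin d → ℝ := r • φ t k with hv
    have houter : vecMulVec v v = (σ ^ 2)⁻¹ • vecMulVec (φ t k) (φ t k) := by
      ext i j
      simp only [vecMulVec_apply, hv, Pi.smul_apply, smul_eq_mul, Matrix.smul_apply]
      rw [← hrr]; ring
    have hBrest : ((σ ^ 2)⁻¹ • B t - vecMulVec v v).PosSemidef := by
      have hBsplit : B t - vecMulVec (φ t k) (φ t k)
          = ∑ j ∈ Finset.univ.erase k, vecMulVec (φ t j) (φ t j) := by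
        rw [hB]
        simp only
        rw [← Finset.add_sum_erase _ _ (Finset.mem_univ k)]
        abel
      have h : (σ ^ 2)⁻¹ • B t - vecMulVec v v
          = (σ ^ 2)⁻¹ • (∑ j ∈ Finset.univ.erase k, vecMulVec (φ t j) (φ t j)) := by
        rw [houter, ← smul_sub, hBsplit]
      rw [h]
      exact psd_smul (psd_sum _ _ (fun j _ => psd_outer _)) (inv_pos.mpr hs2).le
    have hquad : v ⬝ᵥ (A t.val)⁻¹ *ᵥ v = (σ ^ 2)⁻¹ * s t k := by
      rw [hv, hsdef]
      simp only [Matrix.mulVec_smul, dotProduct_smul, smul_dotProduct, smul_eq_mul]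
      rw [← hrr]; ring
    have hkey := det_mul_one_add_le (hApd t.val) v hBrest
    rw [hquad] at hkey
    rw [← hstep t] at hkey
    have hpos1 : (0:ℝ) < 1 + (σ ^ 2)⁻¹ * s t k := by
      have := hs0 t k
      have h2 : 0 ≤ (σ ^ 2)⁻¹ * s t k := mul_nonneg (inv_pos.mpr hs2).le this
      linarith
    have hmulpos : 0 < (A t.val).det * (1 + (σ ^ 2)⁻¹ * s t k) :=
      mul_pos (hdetpos t.val) hpos1
    have hlog := Real.log_le_log hmulpos hkey
    rw [Real.log_mul (hdetpos t.val).ne' hpos1.ne'] at hlog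
    linarith
  have hΔ0 : ∀ t : Fin n, 0 ≤ Real.log ((A (t.val + 1)).det) - Real.log ((A t.val).det) := by
    intro t
    have h := det_le_det_add (hApd t.val) (psd_smul (hBpsd t) (inv_pos.mpr hs2).le)
    rw [← hstep t] at h
    have := Real.log_le_log (hdetpos t.val) h
    linarith
  -- telescoping
  have htel : ∑ t : Fin n, (Real.log ((A (t.val + 1)).det) - Real.log ((A t.val).det))
      = Real.log ((A n).det) - Real.log ((A 0).det) := by
    rw [Fin.sum_univ_eq_sum_range (fun t => Real.log ((A (t + 1)).det) - Real.log ((A t).det))]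
    exact Finset.sum_range_sub (fun t => Real.log ((A t).det)) n
  -- the final determinant bound
  have hfinal : Real.log ((A n).det) - Real.log ((A 0).det)
      ≤ d * Real.log (1 + n * K * lam ^ 2 / (d * σ ^ 2)) := by
    set X : ℝ := n * K * lam ^ 2 / (d * σ ^ 2) with hX
    have hX0 : 0 ≤ X := by positivity
    have hc1 : (0:ℝ) < (lam ^ 2)⁻¹ := inv_pos.mpr hl2
    have hA0 : A 0 = (lam ^ 2)⁻¹ • (1 : Matrix (Fin d) (Fin d) ℝ) := by
      rw [hA]
      simp only
      rw [show (Finset.univ.filter (fun τ : Fin n => (τ : ℕ) < 0)) = ∅ by simp]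
      simp
    have hA0det : Real.log ((A 0).det) = d * Real.log ((lam ^ 2)⁻¹) := by
      rw [hA0, Matrix.det_smul, Matrix.det_one, mul_one, Fintype.card_fin, Real.log_pow]
    have htrB1 : ∀ (τ : Fin n) (k : Fin (m τ)),
        (vecMulVec (φ τ k) (φ τ k)).trace = φ τ k ⬝ᵥ φ τ k := by
      intro τ k
      simp [Matrix.trace, Matrix.diag, vecMulVec_apply, dotProduct]
    have htrB : ∀ τ : Fin n, (B τ).trace ≤ (K : ℝ) := by
      intro τ
      rw [hB]
      simp only [Matrix.trace_sum]
      calc ∑ k, (vecMulVec (φ τ k) (φ τ k)).trace ≤ ∑ _k : Fin (m τ), (1:ℝ) := by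
            apply Finset.sum_le_sum
            intro k _
            rw [htrB1 τ k]; exact hφ1 τ k
        _ = (m τ : ℝ) := by simp
        _ ≤ K := by exact_mod_cast hm τ
    have htrB0 : ∀ τ : Fin n, 0 ≤ (B τ).trace := by
      intro τ
      rw [hB]
      simp only [Matrix.trace_sum]
      apply Finset.sum_nonneg
      intro k _
      rw [htrB1 τ k]
      exact Finset.sum_nonneg fun i _ => mul_self_nonneg _
    have htreq : (A n).trace = (lam ^ 2)⁻¹ * d +
        (σ ^ 2)⁻¹ * ∑ τ ∈ Finset.univ.filter (fun τ : Fin n => (τ : ℕ) < n), (B τ).trace := by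
      rw [hA]
      simp only
      rw [Matrix.trace_add, Matrix.trace_smul, Matrix.trace_smul, Matrix.trace_one,
        Matrix.trace_sum]
      simp [smul_eq_mul, Fintype.card_fin]
    have hsumtr : ∑ τ ∈ Finset.univ.filter (fun τ : Fin n => (τ : ℕ) < n), (B τ).trace
        ≤ (n : ℝ) * K := by
      calc ∑ τ ∈ Finset.univ.filter (fun τ : Fin n => (τ : ℕ) < n), (B τ).trace
          ≤ ∑ τ : Fin n, (B τ).trace :=
            Finset.sum_le_sum_of_subset_of_nonneg (Finset.filter_subset _ _)
              (fun τ _ _ => htrB0 τ)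
        _ ≤ ∑ _τ : Fin n, (K : ℝ) := Finset.sum_le_sum fun τ _ => htrB τ
        _ = (n : ℝ) * K := by simp [mul_comm]
    have hrhs : (d : ℝ) * (lam ^ 2)⁻¹ * (1 + X)
        = (lam ^ 2)⁻¹ * d + (σ ^ 2)⁻¹ * ((n : ℝ) * K) := by
      rw [hX]
      field_simp
    have hT : (A n).trace ≤ d * (lam ^ 2)⁻¹ * (1 + X) := by
      rw [htreq, hrhs]
      have h2 := mul_le_mul_of_nonneg_left hsumtr (inv_pos.mpr hs2).le
      linarith
    have hTpos : 0 < (A n).trace := by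
      rw [htreq]
      have h2 : 0 ≤ (σ ^ 2)⁻¹ *
          ∑ τ ∈ Finset.univ.filter (fun τ : Fin n => (τ : ℕ) < n), (B τ).trace :=
        mul_nonneg (inv_pos.mpr hs2).le (Finset.sum_nonneg fun τ _ => htrB0 τ)
      have h3 : (0:ℝ) < (lam ^ 2)⁻¹ * d := by positivity
      linarith
    have h1 := logdet_le_trace hd (hApd n)
    have hdc1 : (0:ℝ) < (d : ℝ) * (lam ^ 2)⁻¹ := by positivity
    have harg : (A n).trace / d / (lam ^ 2)⁻¹ ≤ 1 + X := by
      rw [div_div, div_le_iff₀ (by positivity)]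
      calc (A n).trace ≤ d * (lam ^ 2)⁻¹ * (1 + X) := hT
        _ = (1 + X) * ((d : ℝ) * (lam ^ 2)⁻¹) := by ring
    have hargpos : 0 < (A n).trace / d / (lam ^ 2)⁻¹ := by positivity
    have hlogmono := Real.log_le_log hargpos harg
    have hsplit : Real.log ((A n).trace / d / (lam ^ 2)⁻¹)
        = Real.log ((A n).trace / d) - Real.log ((lam ^ 2)⁻¹) := by
      rw [Real.log_div (by positivity) hc1.ne']
    calc Real.log ((A n).det) - Real.log ((A 0).det)
        ≤ d * Real.log ((A n).trace / d) - d * Real.log ((lam ^ 2)⁻¹) := by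
          rw [hA0det]; linarith
      _ = d * (Real.log ((A n).trace / d) - Real.log ((lam ^ 2)⁻¹)) := by ring
      _ = d * Real.log ((A n).trace / d / (lam ^ 2)⁻¹) := by rw [hsplit]
      _ ≤ d * Real.log (1 + X) := mul_le_mul_of_nonneg_left hlogmono hd0.le
  -- log positivity
  have hL : 0 < Real.log (1 + lam ^ 2 / σ ^ 2) := by
    apply Real.log_pos
    have : 0 < lam ^ 2 / σ ^ 2 := by positivity
    linarith
  -- assemble
  have hLHS : ∑ t, ∑ k, φ t k ⬝ᵥ (Sig t).mulVec (φ t k) = ∑ t, ∑ k, s t k := by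
    apply Finset.sum_congr rfl
    intro t _
    apply Finset.sum_congr rfl
    intro k _
    rw [hSig' t, hsdef]
  rw [hLHS]
  have hstep1 : ∑ t, ∑ k, s t k
      ≤ ∑ t, ∑ k, lam ^ 2 / Real.log (1 + lam ^ 2 / σ ^ 2)
          * Real.log (1 + (σ ^ 2)⁻¹ * s t k) := by
    apply Finset.sum_le_sum
    intro t _
    apply Finset.sum_le_sum
    intro k _
    have hc := chord hlam hσ (hs0 t k) (hsle t k)
    rw [div_mul_eq_mul_div, le_div_iff₀ hL]
    calc s t k * Real.log (1 + lam ^ 2 / σ ^ 2)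
        ≤ lam ^ 2 * Real.log (1 + s t k / σ ^ 2) := hc
      _ = lam ^ 2 * Real.log (1 + (σ ^ 2)⁻¹ * s t k) := by rw [inv_mul_eq_div]
  have hstep2 : ∑ t, ∑ k, Real.log (1 + (σ ^ 2)⁻¹ * s t k)
      ≤ (K : ℝ) * (Real.log ((A n).det) - Real.log ((A 0).det)) := by
    calc ∑ t, ∑ k, Real.log (1 + (σ ^ 2)⁻¹ * s t k)
        ≤ ∑ t : Fin n, (K : ℝ) * (Real.log ((A (t.val + 1)).det) - Real.log ((A t.val).det)) := by
          apply Finset.sum_le_sum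
          intro t _
          calc ∑ k, Real.log (1 + (σ ^ 2)⁻¹ * s t k)
              ≤ ∑ _k : Fin (m t), (Real.log ((A (t.val + 1)).det) - Real.log ((A t.val).det)) :=
                Finset.sum_le_sum fun k _ => hdetstep t k
            _ = (m t : ℝ) * (Real.log ((A (t.val + 1)).det) - Real.log ((A t.val).det)) := by
                simp [Finset.sum_const, nsmul_eq_mul]
                ring
            _ ≤ (K : ℝ) * (Real.log ((A (t.val + 1)).det) - Real.log ((A t.val).det)) := by
                apply mul_le_mul_of_nonneg_right _ (hΔ0 t)
                exact_mod_cast hm t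
      _ = (K : ℝ) * (Real.log ((A n).det) - Real.log ((A 0).det)) := by
          rw [← htel, Finset.mul_sum]
  calc ∑ t, ∑ k, s t k
      ≤ ∑ t, ∑ k, lam ^ 2 / Real.log (1 + lam ^ 2 / σ ^ 2)
          * Real.log (1 + (σ ^ 2)⁻¹ * s t k) := hstep1
    _ = lam ^ 2 / Real.log (1 + lam ^ 2 / σ ^ 2)
          * ∑ t, ∑ k, Real.log (1 + (σ ^ 2)⁻¹ * s t k) := by
        rw [Finset.mul_sum]
        apply Finset.sum_congr rfl
        intro t _
        rw [Finset.mul_sum]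
    _ ≤ lam ^ 2 / Real.log (1 + lam ^ 2 / σ ^ 2)
          * ((K : ℝ) * (Real.log ((A n).det) - Real.log ((A 0).det))) := by
        apply mul_le_mul_of_nonneg_left hstep2
        positivity
    _ ≤ lam ^ 2 / Real.log (1 + lam ^ 2 / σ ^ 2)
          * ((K : ℝ) * (d * Real.log (1 + n * K * lam ^ 2 / (d * σ ^ 2)))) := by
        apply mul_le_mul_of_nonneg_left _ (by positivity)
        apply mul_le_mul_of_nonneg_left hfinal (by positivity)
    _ = d * K * lam ^ 2 * Real.log (1 + n * K * lam ^ 2 / (d * σ ^ 2)) /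
          Real.log (1 + lam ^ 2 / σ ^ 2) := by
        field_simp
end

section
/- Let λ > 0, let θ̄ ∈ ℝ^d, let Σ ∈ ℝ^{d×d} be symmetric positive definite with Σ ⪯ λ² I (i.e., λ² I − Σ is positive semidefinite), and let θ be a random vector with the multivariate Gaussian distribution N(θ̄, Σ). Let φ₁, …, φ_L ∈ ℝ^d satisfy ‖φ_e‖₂ ≤ 1 for every e, and let c > 0. Then E[ Σ_{e=1}^L max( ⟨φ_e, θ − θ̄⟩ − c √(φ_eᵀ Σ φ_e), 0 ) ] ≤ (λ L / √(2π)) · exp(−c²/2). -/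
open MeasureTheory ProbabilityTheory Matrix Finset

/-- `ν` is the multivariate Gaussian distribution on ℝ^d with mean `m` and covariance
matrix `S`, characterized (Cramér–Wold) through its one-dimensional projections:
for every a ∈ ℝ^d, ⟨a, x⟩ has the Gaussian distribution N(⟨a, m⟩, aᵀ S a). -/
def IsGaussianVec {d : ℕ} (ν : Measure (Fin d → ℝ)) (m : Fin d → ℝ)
    (S : Matrix (Fin d) (Fin d) ℝ) : Prop :=
  ∀ a : Fin d → ℝ, ν.map (fun x => a ⬝ᵥ x) =
    gaussianReal (a ⬝ᵥ m) (Real.toNNReal (a ⬝ᵥ S.mulVec a))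

open scoped NNReal ENNReal
open Real Filter Set

lemma key_integral {b : ℝ} (hb : 0 < b) (a : ℝ) :
    ∫ x in Set.Ioi a, x * Real.exp (-b * x ^ 2) = Real.exp (-b * a ^ 2) / (2 * b) := by
  have hderiv : ∀ x ∈ Set.Ici a, HasDerivAt (fun x => -(2 * b)⁻¹ * Real.exp (-b * x ^ 2))
      (x * Real.exp (-b * x ^ 2)) x := by
    intro x _
    have h1 : HasDerivAt (fun x : ℝ => -b * x ^ 2) (-b * (2 * x)) x := by
      simpa using (hasDerivAt_pow 2 x).const_mul (-b)
    have h2 := (h1.exp).const_mul (-(2 * b)⁻¹)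
    refine h2.congr_deriv ?_
    field_simp
  have ht : Tendsto (fun x : ℝ => -(2 * b)⁻¹ * Real.exp (-b * x ^ 2)) atTop (nhds 0) := by
    have h1 : Tendsto (fun x : ℝ => b * x ^ 2) atTop atTop :=
      (tendsto_pow_atTop two_ne_zero).const_mul_atTop hb
    have h2 : Tendsto (fun x : ℝ => -b * x ^ 2) atTop atBot := by
      simp only [neg_mul]; exact tendsto_neg_atBot_iff.mpr h1
    have := (Real.tendsto_exp_atBot.comp h2).const_mul (-(2 * b)⁻¹)
    simpa using this
  have := integral_Ioi_of_hasDerivAt_of_tendsto' hderiv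
    ((integrable_mul_exp_neg_mul_sq hb).integrableOn) ht
  rw [this]
  field_simp
  ring

lemma pdf_expand (w : ℝ≥0) (x : ℝ) :
    gaussianPDFReal 0 w x = (Real.sqrt (2 * π * w))⁻¹ * Real.exp (-(2 * (w : ℝ))⁻¹ * x ^ 2) := by
  unfold gaussianPDFReal
  congr 1
  rw [sub_zero]
  ring_nf

lemma integrable_max_gauss (w : ℝ≥0) (hw : w ≠ 0) (a : ℝ) :
    Integrable (fun y => max (y - a) 0) (gaussianReal 0 w) := by
  have hwpos : (0 : ℝ) < (w : ℝ) := by positivity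
  have hb : (0 : ℝ) < (2 * (w : ℝ))⁻¹ := by positivity
  set b : ℝ := (2 * (w : ℝ))⁻¹ with hbdef
  set K : ℝ := (Real.sqrt (2 * π * w))⁻¹ with hK
  have hKpos : 0 < K := by
    have : (0:ℝ) < 2 * π * w := by positivity
    positivity
  rw [gaussianReal_of_var_ne_zero _ hw]
  have hmeas : Measurable fun x => (gaussianPDFReal 0 w x).toNNReal :=
    (measurable_gaussianPDFReal 0 w).real_toNNReal
  have hpdf : gaussianPDF 0 w = fun x => ((gaussianPDFReal 0 w x).toNNReal : ℝ≥0∞) := rfl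
  rw [hpdf, integrable_withDensity_iff_integrable_smul hmeas]
  have hsmul : (fun x => (gaussianPDFReal 0 w x).toNNReal • max (x - a) 0)
      = fun x => gaussianPDFReal 0 w x * max (x - a) 0 := by
    funext x
    rw [NNReal.smul_def, Real.coe_toNNReal _ (gaussianPDFReal_nonneg _ _ _)]
    rfl
  rw [hsmul]
  have i1 : Integrable (fun x : ℝ => |x| * Real.exp (-b * x ^ 2)) := by
    have := (integrable_mul_exp_neg_mul_sq hb).abs
    refine this.congr ?_
    filter_upwards with x
    rw [abs_mul, abs_of_pos (Real.exp_pos _)]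
  have i2 : Integrable (fun x : ℝ => Real.exp (-b * x ^ 2)) := integrable_exp_neg_mul_sq hb
  have iD : Integrable (fun x : ℝ => K * (|x| * Real.exp (-b * x ^ 2)
      + |a| * Real.exp (-b * x ^ 2))) := (i1.add (i2.const_mul |a|)).const_mul K
  refine iD.mono' ?_ ?_
  · exact ((measurable_gaussianPDFReal 0 w).mul
      ((measurable_id.sub_const a).max measurable_const)).aestronglyMeasurable
  · filter_upwards with x
    have h1 : 0 ≤ max (x - a) 0 := le_max_right _ _
    have h2 : max (x - a) 0 ≤ |x| + |a| := by
      rcases le_or_gt (x - a) 0 with h | h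
      · rw [max_eq_right h]; positivity
      · rw [max_eq_left h.le]
        calc x - a ≤ |x - a| := le_abs_self _
        _ ≤ |x| + |a| := abs_sub _ _
    rw [Real.norm_eq_abs, abs_of_nonneg (mul_nonneg (gaussianPDFReal_nonneg _ _ _) h1),
      pdf_expand]
    calc K * Real.exp (-b * x ^ 2) * max (x - a) 0
        ≤ K * Real.exp (-b * x ^ 2) * (|x| + |a|) := by
          apply mul_le_mul_of_nonneg_left h2
          positivity
      _ = K * (|x| * Real.exp (-b * x ^ 2) + |a| * Real.exp (-b * x ^ 2)) := by ring

lemma gauss_max_bound (w : ℝ≥0) (hw : w ≠ 0) {a : ℝ} (ha : 0 ≤ a) :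
    ∫ y, max (y - a) 0 ∂(gaussianReal 0 w)
      ≤ Real.sqrt w / Real.sqrt (2 * π) * Real.exp (-a ^ 2 / (2 * w)) := by
  have hwpos : (0 : ℝ) < (w : ℝ) := by positivity
  have hb : (0 : ℝ) < (2 * (w : ℝ))⁻¹ := by positivity
  set b : ℝ := (2 * (w : ℝ))⁻¹ with hbdef
  set K : ℝ := (Real.sqrt (2 * π * w))⁻¹ with hK
  rw [gaussianReal_of_var_ne_zero _ hw]
  have hmeas : Measurable fun x => (gaussianPDFReal 0 w x).toNNReal :=
    (measurable_gaussianPDFReal 0 w).real_toNNReal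
  have hpdf : gaussianPDF 0 w = fun x => ((gaussianPDFReal 0 w x).toNNReal : ℝ≥0∞) := rfl
  rw [hpdf, integral_withDensity_eq_integral_smul hmeas]
  have hsmul : (fun x => (gaussianPDFReal 0 w x).toNNReal • max (x - a) 0)
      = fun x => gaussianPDFReal 0 w x * max (x - a) 0 := by
    funext x
    rw [NNReal.smul_def, Real.coe_toNNReal _ (gaussianPDFReal_nonneg _ _ _)]
    rfl
  rw [hsmul]
  have hind : (fun x => gaussianPDFReal 0 w x * max (x - a) 0)
      = Set.indicator (Set.Ioi a) (fun x => gaussianPDFReal 0 w x * (x - a)) := by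
    funext x
    by_cases hx : x ∈ Set.Ioi a
    · rw [Set.indicator_of_mem hx, max_eq_left (by simp at hx; linarith)]
    · rw [Set.indicator_of_notMem hx, max_eq_right (by simp at hx; linarith), mul_zero]
  rw [hind, integral_indicator measurableSet_Ioi]
  have imain : Integrable (fun x : ℝ => K * (x * Real.exp (-b * x ^ 2))) :=
    (integrable_mul_exp_neg_mul_sq hb).const_mul K
  have isub : Integrable (fun x : ℝ => K * ((x - a) * Real.exp (-b * x ^ 2))) := by
    have : Integrable (fun x : ℝ => K * (x * Real.exp (-b * x ^ 2))
        - (K * a) * Real.exp (-b * x ^ 2)) :=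
      imain.sub ((integrable_exp_neg_mul_sq hb).const_mul (K * a))
    refine this.congr ?_
    filter_upwards with x
    ring
  have hgeq : ∀ x : ℝ, gaussianPDFReal 0 w x * (x - a) = K * ((x - a) * Real.exp (-b * x ^ 2)) :=
    fun x => by rw [pdf_expand]; ring
  have hgeq2 : ∀ x : ℝ, gaussianPDFReal 0 w x * x = K * (x * Real.exp (-b * x ^ 2)) :=
    fun x => by rw [pdf_expand]; ring
  calc ∫ x in Set.Ioi a, gaussianPDFReal 0 w x * (x - a)
      ≤ ∫ x in Set.Ioi a, gaussianPDFReal 0 w x * x := by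
        refine setIntegral_mono_on ?_ ?_ measurableSet_Ioi ?_
        · exact (isub.congr (by filter_upwards with x; rw [hgeq])).integrableOn
        · exact (imain.congr (by filter_upwards with x; rw [hgeq2])).integrableOn
        · intro x hx
          have : a < x := hx
          apply mul_le_mul_of_nonneg_left (by linarith) (gaussianPDFReal_nonneg _ _ _)
    _ = K * (Real.exp (-b * a ^ 2) / (2 * b)) := by
        simp_rw [hgeq2]
        rw [integral_const_mul, key_integral hb]
    _ = Real.sqrt w / Real.sqrt (2 * π) * Real.exp (-a ^ 2 / (2 * w)) := by
        have h2b : (2 * b) = ((w : ℝ))⁻¹ := by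
          rw [hbdef]
          field_simp
        have hKv : K = (Real.sqrt (2 * π) * Real.sqrt w)⁻¹ := by
          rw [hK, Real.sqrt_mul (by positivity)]
        have hexp : -b * a ^ 2 = -a ^ 2 / (2 * w) := by
          rw [hbdef]; field_simp
        have hsw : (0:ℝ) < Real.sqrt w := Real.sqrt_pos.mpr hwpos
        have hs2 : (0:ℝ) < Real.sqrt (2 * π) := Real.sqrt_pos.mpr (by positivity)
        have hww : Real.sqrt w * Real.sqrt w = (w : ℝ) := Real.mul_self_sqrt hwpos.le
        have key2 : (Real.sqrt (2 * π) * Real.sqrt w)⁻¹ * (w:ℝ) = Real.sqrt w / Real.sqrt (2 * π) := by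
          rw [inv_mul_eq_div, div_eq_div_iff (by positivity) hs2.ne']
          linear_combination Real.sqrt (2 * π) * hww.symm
        rw [h2b, hKv, hexp, div_inv_eq_mul, show (Real.sqrt (2*π) * Real.sqrt w)⁻¹ *
            (rexp (-a^2/(2*(w:ℝ))) * (w:ℝ)) = ((Real.sqrt (2*π) * Real.sqrt w)⁻¹ * (w:ℝ)) *
            rexp (-a^2/(2*(w:ℝ))) from by ring, key2]

lemma meas_dot {d : ℕ} (a : Fin d → ℝ) : Measurable fun x : Fin d → ℝ => a ⬝ᵥ x := by
  simp only [dotProduct]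
  exact Finset.measurable_sum _ fun i _ => (measurable_pi_apply i : Measurable fun x : Fin d → ℝ => x i).const_mul (a i)

/-- if θ ~ N(θ̄, Σ) with Σ positive definite and Σ ⪯ λ² I, and
‖φ_e‖₂ ≤ 1 for e = 1,…,L, then for any c > 0,
E[ Σ_{e=1}^L max(⟨φ_e, θ − θ̄⟩ − c √(φ_eᵀ Σ φ_e), 0) ] ≤ (λ L/√(2π)) exp(−c²/2). -/
theorem stmt_10 {d L : ℕ} (lam : ℝ) (hlam : 0 < lam)
    (θb : Fin d → ℝ) (S : Matrix (Fin d) (Fin d) ℝ) (hSpd : S.PosDef)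
    (hSle : (lam ^ 2 • (1 : Matrix (Fin d) (Fin d) ℝ) - S).PosSemidef)
    (ν : Measure (Fin d → ℝ)) (hν : IsGaussianVec ν θb S)
    (φ : Fin L → Fin d → ℝ) (hφ : ∀ e, Real.sqrt (φ e ⬝ᵥ φ e) ≤ 1)
    (c : ℝ) (hc : 0 < c) :
    (∫ x, ∑ e, max (φ e ⬝ᵥ (x - θb) - c * Real.sqrt (φ e ⬝ᵥ S.mulVec (φ e))) 0 ∂ν) ≤
      lam * L / Real.sqrt (2 * Real.pi) * Real.exp (-c ^ 2 / 2) := by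
  classical
  set C : ℝ := Real.exp (-c ^ 2 / 2) / Real.sqrt (2 * Real.pi) with hC
  have hCnn : 0 ≤ C := by
    have : (0:ℝ) < Real.sqrt (2 * Real.pi) := Real.sqrt_pos.mpr (by positivity)
    positivity
  have key : ∀ e : Fin L,
      Integrable (fun x => max (φ e ⬝ᵥ (x - θb)
        - c * Real.sqrt (φ e ⬝ᵥ S.mulVec (φ e))) 0) ν ∧
      (∫ x, max (φ e ⬝ᵥ (x - θb) - c * Real.sqrt (φ e ⬝ᵥ S.mulVec (φ e))) 0 ∂ν) ≤ lam * C := by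
    intro e
    by_cases h0 : φ e = 0
    · have hz : (fun x : Fin d → ℝ => max (φ e ⬝ᵥ (x - θb)
          - c * Real.sqrt (φ e ⬝ᵥ S.mulVec (φ e))) 0) = fun _ => 0 := by
        funext x
        simp [h0]
      rw [hz]
      refine ⟨integrable_zero _ _ _, ?_⟩
      rw [integral_zero]
      positivity
    · set v : ℝ := φ e ⬝ᵥ S.mulVec (φ e) with hvdef
      have hv : 0 < v := by
        have := hSpd.dotProduct_mulVec_pos h0
        simpa using this
      set w : ℝ≥0 := Real.toNNReal v with hwdef
      have hw : w ≠ 0 := by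
        simp only [hwdef, ne_eq, Real.toNNReal_eq_zero, not_le]
        exact hv
      have hwv : (w : ℝ) = v := Real.coe_toNNReal v hv.le
      set σ : ℝ := Real.sqrt v with hσ
      have hσpos : 0 < σ := Real.sqrt_pos.mpr hv
      set μ0 : ℝ := φ e ⬝ᵥ θb with hμ0
      have hmdot : Measurable fun x : Fin d → ℝ => φ e ⬝ᵥ x := meas_dot _
      set fe : ℝ → ℝ := fun y => max (y - μ0 - c * σ) 0 with hfe
      have hfc : Continuous fe :=
        ((continuous_id.sub continuous_const).sub continuous_const).max continuous_const
      have hrw : (fun x : Fin d → ℝ => max (φ e ⬝ᵥ (x - θb)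
          - c * Real.sqrt (φ e ⬝ᵥ S.mulVec (φ e))) 0) = fun x => fe (φ e ⬝ᵥ x) := by
        funext x
        simp only [hfe, ← hvdef, ← hσ, ← hμ0, dotProduct_sub, sub_sub]
      have hmap : ν.map (fun x => φ e ⬝ᵥ x) = gaussianReal μ0 w := hν (φ e)
      have hshift : gaussianReal μ0 w = (gaussianReal 0 w).map (· + μ0) := by
        rw [gaussianReal_map_add_const, zero_add]
      -- integrability of fe under the shifted Gaussian
      have hint0 : Integrable (fun y => max (y - c * σ) 0) (gaussianReal 0 w) :=
        integrable_max_gauss w hw _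
      have hintμ : Integrable fe (gaussianReal μ0 w) := by
        rw [hshift, integrable_map_measure hfc.aestronglyMeasurable
          (measurable_add_const μ0).aemeasurable]
        refine hint0.congr ?_
        filter_upwards with y
        simp only [hfe, Function.comp, sub_sub]
        congr 1
        ring
      have hintν : Integrable (fun x => fe (φ e ⬝ᵥ x)) ν := by
        have := (integrable_map_measure hfc.aestronglyMeasurable hmdot.aemeasurable).mp
          (hmap ▸ hintμ)
        exact this
      refine ⟨hrw ▸ hintν, ?_⟩
      have heq1 : (∫ x, max (φ e ⬝ᵥ (x - θb)
            - c * Real.sqrt (φ e ⬝ᵥ S.mulVec (φ e))) 0 ∂ν)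
          = ∫ y, fe y ∂(gaussianReal μ0 w) := by
        rw [hrw, ← hmap, integral_map hmdot.aemeasurable hfc.aestronglyMeasurable]
      have heq2 : (∫ y, fe y ∂(gaussianReal μ0 w))
          = ∫ y, max (y - c * σ) 0 ∂(gaussianReal 0 w) := by
        rw [hshift, integral_map (measurable_add_const μ0).aemeasurable
          hfc.aestronglyMeasurable]
        congr 1
        funext y
        simp only [hfe, sub_sub]
        congr 1
        ring
      have hbound := gauss_max_bound w hw (a := c * σ) (by positivity)
      have hσw : Real.sqrt w = σ := by rw [hwv]
      have hexp' : -(c * σ) ^ 2 / (2 * (w:ℝ)) = -c ^ 2 / 2 := by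
        rw [hwv]
        have : σ ^ 2 = v := Real.sq_sqrt hv.le
        field_simp
        rw [this]
      rw [heq1, heq2]
      calc ∫ y, max (y - c * σ) 0 ∂(gaussianReal 0 w)
          ≤ Real.sqrt w / Real.sqrt (2 * π) * Real.exp (-(c * σ) ^ 2 / (2 * w)) := hbound
        _ = σ * C := by rw [hσw, hexp', hC]; ring
        _ ≤ lam * C := by
            apply mul_le_mul_of_nonneg_right _ hCnn
            -- σ ≤ lam
            have hφφ : φ e ⬝ᵥ φ e ≤ 1 := by
              have hnn : 0 ≤ φ e ⬝ᵥ φ e :=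
                Finset.sum_nonneg fun i _ => mul_self_nonneg _
              calc φ e ⬝ᵥ φ e = Real.sqrt (φ e ⬝ᵥ φ e) * Real.sqrt (φ e ⬝ᵥ φ e) :=
                    (Real.mul_self_sqrt hnn).symm
                _ ≤ 1 * 1 := mul_le_mul (hφ e) (hφ e) (Real.sqrt_nonneg _) zero_le_one
                _ = 1 := one_mul 1
            have hle : v ≤ lam ^ 2 := by
              have h := hSle.dotProduct_mulVec_nonneg (φ e)
              simp only [star_trivial, sub_mulVec, smul_mulVec, one_mulVec,
                dotProduct_sub, dotProduct_smul, smul_eq_mul] at h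
              have h2 : lam ^ 2 * (φ e ⬝ᵥ φ e) ≤ lam ^ 2 * 1 :=
                mul_le_mul_of_nonneg_left hφφ (by positivity)
              rw [← hvdef] at h
              nlinarith
            calc σ = Real.sqrt v := hσ
              _ ≤ Real.sqrt (lam ^ 2) := Real.sqrt_le_sqrt hle
              _ = lam := by rw [Real.sqrt_sq hlam.le]
  rw [integral_finset_sum _ fun e _ => (key e).1]
  calc (∑ e, ∫ x, max (φ e ⬝ᵥ (x - θb) - c * Real.sqrt (φ e ⬝ᵥ S.mulVec (φ e))) 0 ∂ν)
      ≤ ∑ _e : Fin L, lam * C := Finset.sum_le_sum fun e _ => (key e).2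
    _ = (L : ℝ) * (lam * C) := by
        rw [Finset.sum_const, Finset.card_univ, Fintype.card_fin, nsmul_eq_mul]
    _ = lam * L / Real.sqrt (2 * Real.pi) * Real.exp (-c ^ 2 / 2) := by
        rw [hC]; ring
end

section
/- Let λ > 0, let θ̄ ∈ ℝ^d, let Σ ∈ ℝ^{d×d} be symmetric positive semidefinite with Σ ⪯ λ² I, and let θ be a random vector with the multivariate Gaussian distribution N(θ̄, Σ). Let E be a finite set, let φ_e ∈ ℝ^d satisfy ‖φ_e‖₂ ≤ 1 for every e ∈ E, let K ≥ 1, and let c > 0. Then E[ max_{A ⊆ E, |A| ≤ K} Σ_{e∈A} ( ⟨φ_e, θ − θ̄⟩ − c √(φ_eᵀ Σ φ_e) ) ] ≤ (2 d K λ / √(2π)) · exp(−c²/(2d)). -/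
open MeasureTheory ProbabilityTheory Matrix Finset
open scoped NNReal ENNReal

-- key improper integral
lemma aux_exp_int {v : ℝ} (hv : 0 < v) (a : ℝ) :
    ∫ x in Set.Ioi a, x * Real.exp (-x^2/(2*v)) = v * Real.exp (-a^2/(2*v)) := by
  have hderiv : ∀ x ∈ Set.Ici a, HasDerivAt (fun x => -v * Real.exp (-x^2/(2*v)))
      (x * Real.exp (-x^2/(2*v))) x := by
    intro x _
    have h1 : HasDerivAt (fun x : ℝ => -x^2/(2*v)) (-x/v) x := by
      have := ((hasDerivAt_pow 2 x).neg).div_const (2*v)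
      refine this.congr_deriv ?_
      field_simp
      ring
    have h2 := (Real.hasDerivAt_exp _).comp x h1
    have h3 := h2.const_mul (-v)
    refine h3.congr_deriv ?_
    field_simp
  have hint : IntegrableOn (fun x => x * Real.exp (-x^2/(2*v))) (Set.Ioi a) := by
    have : Integrable (fun x : ℝ => x * Real.exp (-(1/(2*v)) * x^2)) :=
      integrable_mul_exp_neg_mul_sq (by positivity)
    refine (this.congr ?_).integrableOn
    filter_upwards with x
    ring_nf
  have htend : Filter.Tendsto (fun x => -v * Real.exp (-x^2/(2*v))) Filter.atTop (nhds 0) := by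
    have h1 : Filter.Tendsto (fun x : ℝ => -x^2/(2*v)) Filter.atTop Filter.atBot := by
      have : Filter.Tendsto (fun x : ℝ => x^2) Filter.atTop Filter.atTop :=
        Filter.tendsto_pow_atTop (by norm_num)
      have h2 := Filter.Tendsto.atTop_div_const (by positivity : (0:ℝ) < 2*v) this
      simpa [neg_div] using Filter.tendsto_neg_atBot_iff.mpr h2
    have := (Real.tendsto_exp_atBot.comp h1).const_mul (-v)
    simpa using this
  have := integral_Ioi_of_hasDerivAt_of_tendsto' hderiv hint htend
  rw [this]
  ring

lemma aux_pdf_abs_integrable {v : ℝ≥0} (hv : v ≠ 0) :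
    Integrable (fun x => gaussianPDFReal 0 v x * |x|) := by
  have hvv : (0:ℝ) < v := by positivity
  have h0 : Integrable (fun x : ℝ => |x * Real.exp (-(1/(2*(v:ℝ))) * x^2)|) :=
    (integrable_mul_exp_neg_mul_sq (by positivity)).abs
  have h1 : Integrable (fun x : ℝ => |x| * Real.exp (-x^2/(2*(v:ℝ)))) := by
    refine h0.congr ?_
    filter_upwards with x
    rw [abs_mul, abs_of_pos (Real.exp_pos _)]
    ring_nf
  have := h1.const_mul (Real.sqrt (2 * Real.pi * v))⁻¹
  refine this.congr ?_
  filter_upwards with x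
  rw [gaussianPDFReal]
  ring_nf

lemma gauss_bound0 (v : ℝ≥0) {a : ℝ} (ha : 0 ≤ a) :
    ∫ y, max (|y| - a) 0 ∂(gaussianReal 0 v) ≤
      2 * Real.sqrt v / Real.sqrt (2*Real.pi) * Real.exp (-a^2/(2*v)) := by
  by_cases hv : v = 0
  · subst hv
    rw [gaussianReal_zero_var, integral_dirac]
    simp only [abs_zero, zero_sub]
    rw [max_eq_right (by linarith)]
    positivity
  have hvv : (0:ℝ) < v := by positivity
  set p : ℝ → ℝ := gaussianPDFReal 0 v with hp
  have hpnn : ∀ x, 0 ≤ p x := fun x => gaussianPDFReal_nonneg 0 v x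
  have hpeven : ∀ x, p (-x) = p x := by
    intro x
    simp [hp, gaussianPDFReal, neg_sq]
  have hpmeas : Measurable p := measurable_gaussianPDFReal 0 v
  have hq : Integrable (fun x => p x * |x|) := aux_pdf_abs_integrable hv
  -- rewrite the gaussian integral as a Lebesgue integral against the density
  have hd : (volume : Measure ℝ).withDensity (gaussianPDF 0 v)
      = (volume : Measure ℝ).withDensity (fun x => ((Real.toNNReal (p x) : ℝ≥0) : ℝ≥0∞)) := rfl
  rw [gaussianReal_of_var_ne_zero 0 hv, hd,
    integral_withDensity_eq_integral_smul hpmeas.real_toNNReal]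
  have hrw : (fun x => Real.toNNReal (p x) • max (|x| - a) 0)
      = fun x => p x * max (|x| - a) 0 := by
    funext x
    simp only [NNReal.smul_def, Real.coe_toNNReal _ (hpnn x), smul_eq_mul]
  rw [hrw]
  -- integrability of all pieces
  have hint : ∀ (f : ℝ → ℝ), Measurable f → (∀ x, 0 ≤ f x) → (∀ x, f x ≤ |x|) →
      Integrable (fun x => p x * f x) := by
    intro f hf h0 h1
    refine hq.mono ((hpmeas.mul hf).aestronglyMeasurable) ?_
    filter_upwards with x
    rw [Real.norm_eq_abs, Real.norm_eq_abs, abs_mul, abs_mul,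
      abs_of_nonneg (hpnn x), abs_of_nonneg (h0 x), abs_abs]
    exact mul_le_mul_of_nonneg_left (h1 x) (hpnn x)
  have hmeas1 : Measurable fun x : ℝ => max (x - a) 0 :=
    (measurable_id.sub measurable_const).max measurable_const
  have hmeas2 : Measurable fun x : ℝ => max (-x - a) 0 :=
    (measurable_neg.sub measurable_const).max measurable_const
  have hi0 : Integrable (fun x => p x * max (|x| - a) 0) := by
    refine hint _ ((measurable_abs.sub measurable_const).max measurable_const)
      (fun x => le_max_right _ _) (fun x => ?_)
    exact max_le (by linarith [abs_nonneg x]) (abs_nonneg x)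
  have hi1 : Integrable (fun x => p x * max (x - a) 0) := by
    refine hint _ hmeas1 (fun x => le_max_right _ _) (fun x => ?_)
    exact max_le (by linarith [le_abs_self x, abs_nonneg x]) (abs_nonneg x)
  have hi2 : Integrable (fun x => p x * max (-x - a) 0) := by
    refine hint _ hmeas2 (fun x => le_max_right _ _) (fun x => ?_)
    exact max_le (by linarith [neg_abs_le x, abs_nonneg x]) (abs_nonneg x)
  -- split |x| into two one-sided pieces
  have hsplit : ∫ x, p x * max (|x| - a) 0 ≤
      (∫ x, p x * max (x - a) 0) + ∫ x, p x * max (-x - a) 0 := by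
    rw [← integral_add hi1 hi2]
    refine integral_mono hi0 (hi1.add hi2) fun x => ?_
    have h1 : max (|x| - a) 0 ≤ max (x - a) 0 + max (-x - a) 0 := by
      rcases le_total 0 x with h | h
      · rw [abs_of_nonneg h]
        have : (0:ℝ) ≤ max (-x - a) 0 := le_max_right _ _
        linarith [le_max_left (x - a) (0:ℝ), le_max_right (x - a) (0:ℝ)]
      · rw [abs_of_nonpos h]
        have : (0:ℝ) ≤ max (x - a) 0 := le_max_right _ _
        linarith [le_max_left (-x - a) (0:ℝ), le_max_right (-x - a) (0:ℝ)]
    nlinarith [hpnn x, le_max_right (x-a) (0:ℝ), le_max_right (-x-a) (0:ℝ)]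
  -- symmetry: the two pieces are equal
  have hsymm : ∫ x, p x * max (-x - a) 0 = ∫ x, p x * max (x - a) 0 := by
    rw [← integral_neg_eq_self (fun x => p x * max (-x - a) 0) volume]
    congr 1
    funext x
    rw [hpeven, neg_neg]
  -- one-sided piece
  have hone : ∫ x, p x * max (x - a) 0 ≤
      Real.sqrt v / Real.sqrt (2*Real.pi) * Real.exp (-a^2/(2*v)) := by
    have hind : (fun x => p x * max (x - a) 0)
        = (Set.Ioi a).indicator (fun x => p x * max (x - a) 0) := by
      funext x
      by_cases hx : x ∈ Set.Ioi a
      · rw [Set.indicator_of_mem hx]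
      · rw [Set.indicator_of_notMem hx]
        have : x ≤ a := le_of_not_gt hx
        rw [max_eq_right (by linarith), mul_zero]
    rw [hind, integral_indicator measurableSet_Ioi]
    have hid : Integrable (fun x => p x * x) := by
      refine hq.mono ((hpmeas.mul measurable_id).aestronglyMeasurable) ?_
      filter_upwards with x
      rw [Real.norm_eq_abs, Real.norm_eq_abs, abs_mul, abs_mul,
        abs_of_nonneg (hpnn x), abs_abs]
    have step1 : ∫ x in Set.Ioi a, p x * max (x - a) 0 ≤ ∫ x in Set.Ioi a, p x * x := by
      refine setIntegral_mono_on hi1.integrableOn hid.integrableOn measurableSet_Ioi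
        (fun x hx => ?_)
      have hx' : a < x := hx
      have : max (x - a) 0 ≤ x := max_le (by linarith) (by linarith)
      exact mul_le_mul_of_nonneg_left this (hpnn x)
    have step2 : ∫ x in Set.Ioi a, p x * x
        = (Real.sqrt (2*Real.pi*v))⁻¹ * ((v:ℝ) * Real.exp (-a^2/(2*(v:ℝ)))) := by
      have heq : ∀ x : ℝ, p x * x
          = (Real.sqrt (2*Real.pi*v))⁻¹ * (x * Real.exp (-x^2/(2*(v:ℝ)))) := by
        intro x
        simp only [hp, gaussianPDFReal, sub_zero]
        ring
      calc ∫ x in Set.Ioi a, p x * x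
          = ∫ x in Set.Ioi a, (Real.sqrt (2*Real.pi*v))⁻¹ * (x * Real.exp (-x^2/(2*(v:ℝ)))) := by
            exact setIntegral_congr_fun measurableSet_Ioi (fun x _ => heq x)
        _ = (Real.sqrt (2*Real.pi*v))⁻¹ * ∫ x in Set.Ioi a, x * Real.exp (-x^2/(2*(v:ℝ))) :=
            integral_const_mul _ _
        _ = (Real.sqrt (2*Real.pi*v))⁻¹ * ((v:ℝ) * Real.exp (-a^2/(2*(v:ℝ)))) := by
            rw [aux_exp_int hvv]
    have hfin : (Real.sqrt (2*Real.pi*v))⁻¹ * ((v:ℝ) * Real.exp (-a^2/(2*(v:ℝ))))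
        = Real.sqrt v / Real.sqrt (2*Real.pi) * Real.exp (-a^2/(2*(v:ℝ))) := by
      have h2pi : Real.sqrt (2*Real.pi*v) = Real.sqrt (2*Real.pi) * Real.sqrt v :=
        Real.sqrt_mul (by positivity) _
      have hvs : Real.sqrt v * Real.sqrt v = (v:ℝ) := Real.mul_self_sqrt hvv.le
      have h1 : Real.sqrt v ≠ 0 := by positivity
      have h2 : Real.sqrt (2*Real.pi) ≠ 0 := by positivity
      rw [h2pi, ← hvs]
      field_simp
      rw [Real.sqrt_sq (Real.sqrt_nonneg _)]
    rw [step2, hfin] at step1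
    exact step1
  calc ∫ x, p x * max (|x| - a) 0 ≤ (∫ x, p x * max (x - a) 0) + ∫ x, p x * max (-x - a) 0 :=
        hsplit
    _ = 2 * ∫ x, p x * max (x - a) 0 := by rw [hsymm]; ring
    _ ≤ 2 * (Real.sqrt v / Real.sqrt (2*Real.pi) * Real.exp (-a^2/(2*(v:ℝ)))) := by
        linarith
    _ = 2 * Real.sqrt v / Real.sqrt (2*Real.pi) * Real.exp (-a^2/(2*(v:ℝ))) := by ring

lemma gauss_meas (m a : ℝ) : Measurable fun y : ℝ => max (|y - m| - a) 0 :=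
  ((measurable_id.sub measurable_const).abs.sub measurable_const).max measurable_const

lemma gauss_integrable0 (v : ℝ≥0) (a : ℝ) :
    Integrable (fun y => max (|y| - a) 0) (gaussianReal 0 v) := by
  have hmeas : Measurable fun y : ℝ => max (|y| - a) 0 :=
    (measurable_abs.sub measurable_const).max measurable_const
  by_cases hv : v = 0
  · subst hv
    rw [gaussianReal_zero_var]
    refine ⟨hmeas.aestronglyMeasurable, ?_⟩
    rw [HasFiniteIntegral, lintegral_dirac' _ hmeas.enorm]
    exact enorm_lt_top
  set p : ℝ → ℝ := gaussianPDFReal 0 v with hp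
  have hpnn : ∀ x, 0 ≤ p x := fun x => gaussianPDFReal_nonneg 0 v x
  have hpmeas : Measurable p := measurable_gaussianPDFReal 0 v
  have hd : (volume : Measure ℝ).withDensity (gaussianPDF 0 v)
      = (volume : Measure ℝ).withDensity (fun x => ((Real.toNNReal (p x) : ℝ≥0) : ℝ≥0∞)) := rfl
  rw [gaussianReal_of_var_ne_zero 0 hv, hd,
    integrable_withDensity_iff_integrable_smul hpmeas.real_toNNReal]
  have hb : Integrable (fun x => p x * |x| + |a| * p x) :=
    (aux_pdf_abs_integrable hv).add ((integrable_gaussianPDFReal 0 v).const_mul |a|)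
  refine hb.mono ?_ ?_
  · exact (hpmeas.real_toNNReal.coe_nnreal_real.smul hmeas).aestronglyMeasurable
  filter_upwards with x
  have h1 : Real.toNNReal (p x) • max (|x| - a) 0 = p x * max (|x| - a) 0 := by
    simp only [NNReal.smul_def, Real.coe_toNNReal _ (hpnn x), smul_eq_mul]
  rw [h1, Real.norm_eq_abs, Real.norm_eq_abs]
  have h2 : max (|x| - a) 0 ≤ |x| + |a| := by
    refine max_le ?_ (by positivity)
    have := neg_abs_le a
    linarith
  have h3 : 0 ≤ p x * max (|x| - a) 0 := mul_nonneg (hpnn x) (le_max_right _ _)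
  rw [abs_of_nonneg h3, abs_of_nonneg (add_nonneg (mul_nonneg (hpnn x) (abs_nonneg x)) (mul_nonneg (abs_nonneg a) (hpnn x)))]
  nlinarith [hpnn x, abs_nonneg x, abs_nonneg a]

lemma gauss_integrable (m : ℝ) (v : ℝ≥0) (a : ℝ) :
    Integrable (fun y => max (|y - m| - a) 0) (gaussianReal m v) := by
  have hmap : (gaussianReal 0 v).map (· + m) = gaussianReal m v := by
    simpa using gaussianReal_map_add_const (μ := 0) (v := v) m
  rw [← hmap, integrable_map_measure (gauss_meas m a).aestronglyMeasurable
    (measurable_add_const m).aemeasurable]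
  have : ((fun y : ℝ => max (|y - m| - a) 0) ∘ (· + m)) = fun x : ℝ => max (|x| - a) 0 := by
    funext x
    simp [Function.comp, add_sub_cancel_right]
  rw [this]
  exact gauss_integrable0 v a

lemma gauss_bound (m : ℝ) (v : ℝ≥0) {a : ℝ} (ha : 0 ≤ a) :
    ∫ y, max (|y - m| - a) 0 ∂(gaussianReal m v) ≤
      2 * Real.sqrt v / Real.sqrt (2*Real.pi) * Real.exp (-a^2/(2*(v:ℝ))) := by
  have hmap : (gaussianReal 0 v).map (· + m) = gaussianReal m v := by
    simpa using gaussianReal_map_add_const (μ := 0) (v := v) m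
  rw [← hmap, integral_map (measurable_add_const m).aemeasurable
    (gauss_meas m a).aestronglyMeasurable]
  have : ∀ x : ℝ, max (|x + m - m| - a) 0 = max (|x| - a) 0 := by
    intro x; rw [add_sub_cancel_right]
  simp only [this]
  exact gauss_bound0 v ha

/-- if θ ~ N(θ̄, Σ) with Σ positive semidefinite and Σ ⪯ λ² I, E is a finite
set, ‖φ_e‖₂ ≤ 1 for all e ∈ E, K ≥ 1 and c > 0, then
E[ max_{A ⊆ E, |A| ≤ K} Σ_{e∈A} ( ⟨φ_e, θ − θ̄⟩ − c √(φ_eᵀ Σ φ_e) ) ]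
  ≤ (2 d K λ/√(2π)) exp(−c²/(2d)). -/
theorem stmt_11 {d : ℕ} {E : Type*} [Fintype E] [DecidableEq E]
    (lam : ℝ) (hlam : 0 < lam)
    (θb : Fin d → ℝ) (S : Matrix (Fin d) (Fin d) ℝ) (hSpsd : S.PosSemidef)
    (hSle : (lam ^ 2 • (1 : Matrix (Fin d) (Fin d) ℝ) - S).PosSemidef)
    (ν : Measure (Fin d → ℝ)) (hν : IsGaussianVec ν θb S)
    (φ : E → Fin d → ℝ) (hφ : ∀ e, Real.sqrt (φ e ⬝ᵥ φ e) ≤ 1)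
    (K : ℕ) (hK : 1 ≤ K) (c : ℝ) (hc : 0 < c) :
    (∫ x, ((Finset.univ.filter fun A : Finset E => A.card ≤ K).sup'
          ⟨∅, by simp⟩
          fun A => ∑ e ∈ A,
            (φ e ⬝ᵥ (x - θb) - c * Real.sqrt (φ e ⬝ᵥ S.mulVec (φ e)))) ∂ν) ≤
      2 * d * K * lam / Real.sqrt (2 * Real.pi) * Real.exp (-c ^ 2 / (2 * d)) := by
  classical
  rcases Nat.eq_zero_or_pos d with hd0 | hd0
  · -- degenerate case d = 0
    subst hd0
    have hF0 : ∀ x : Fin 0 → ℝ,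
        ((Finset.univ.filter fun A : Finset E => A.card ≤ K).sup'
          ⟨∅, by simp⟩
          fun A => ∑ e ∈ A,
            (φ e ⬝ᵥ (x - θb) - c * Real.sqrt (φ e ⬝ᵥ S.mulVec (φ e)))) = 0 := by
      intro x
      have hz : ∀ A : Finset E, (∑ e ∈ A,
          (φ e ⬝ᵥ (x - θb) - c * Real.sqrt (φ e ⬝ᵥ S.mulVec (φ e)))) = 0 := by
        intro A
        apply Finset.sum_eq_zero
        intro e _
        have h1 : φ e ⬝ᵥ (x - θb) = 0 := by simp [dotProduct]
        have h2 : φ e ⬝ᵥ S.mulVec (φ e) = 0 := by simp [dotProduct]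
        rw [h1, h2, Real.sqrt_zero]
        ring
      rw [show (fun A : Finset E => ∑ e ∈ A,
          (φ e ⬝ᵥ (x - θb) - c * Real.sqrt (φ e ⬝ᵥ S.mulVec (φ e)))) = fun _ => (0:ℝ) from
        funext hz]
      exact Finset.sup'_const _ _
    simp only [hF0, integral_zero, Nat.cast_zero]
    norm_num
  -- main case
  have hdpos : (0:ℝ) < d := by exact_mod_cast hd0
  have hH : S.IsHermitian := hSpsd.1
  set B := hH.eigenvectorBasis with hB
  set μ : Fin d → ℝ := hH.eigenvalues with hμ
  set v : Fin d → (Fin d → ℝ) := fun i => ⇑(B i) with hv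
  have hinner : ∀ x y : Fin d → ℝ,
      (inner ℝ ((WithLp.equiv 2 (Fin d → ℝ)).symm x) ((WithLp.equiv 2 (Fin d → ℝ)).symm y) : ℝ)
        = x ⬝ᵥ y := by
    intro x y
    simp [PiLp.inner_apply, RCLike.inner_apply, dotProduct, WithLp.equiv_symm_apply, mul_comm]
  have hBv : ∀ i, B i = (WithLp.equiv 2 (Fin d → ℝ)).symm (v i) := by
    intro i
    simp [hv]
  have hPar : ∀ x y : Fin d → ℝ, x ⬝ᵥ y = ∑ i, (x ⬝ᵥ v i) * (v i ⬝ᵥ y) := by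
    intro x y
    have h := B.sum_inner_mul_inner ((WithLp.equiv 2 (Fin d → ℝ)).symm x)
      ((WithLp.equiv 2 (Fin d → ℝ)).symm y)
    rw [← hinner x y, ← h]
    refine Finset.sum_congr rfl fun i _ => ?_
    rw [hBv i, hinner x (v i), hinner (v i) y]
  have hvv : ∀ i, v i ⬝ᵥ v i = 1 := by
    intro i
    have h := (orthonormal_iff_ite.mp B.orthonormal) i i
    rw [hBv i, hinner (v i) (v i)] at h
    simpa using h
  have hST : Sᵀ = S := by
    ext i j
    have := congrFun (congrFun hH i) j
    simpa [conjTranspose_apply] using this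
  have hsymm : ∀ x y : Fin d → ℝ, x ⬝ᵥ S.mulVec y = S.mulVec x ⬝ᵥ y := by
    intro x y
    rw [dotProduct_mulVec, ← mulVec_transpose, hST]
  have hSv : ∀ i, S.mulVec (v i) = μ i • v i := fun i => hH.mulVec_eigenvectorBasis i
  have hviSy : ∀ (i) (y : Fin d → ℝ), v i ⬝ᵥ S.mulVec y = μ i * (v i ⬝ᵥ y) := by
    intro i y
    rw [hsymm, hSv, smul_dotProduct, smul_eq_mul]
  have hquad : ∀ y : Fin d → ℝ, y ⬝ᵥ S.mulVec y = ∑ i, μ i * (v i ⬝ᵥ y)^2 := by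
    intro y
    rw [hPar y (S.mulVec y)]
    refine Finset.sum_congr rfl fun i _ => ?_
    rw [hviSy i y, dotProduct_comm y (v i)]
    ring
  have hnorm : ∀ y : Fin d → ℝ, y ⬝ᵥ y = ∑ i, (v i ⬝ᵥ y)^2 := by
    intro y
    rw [hPar y y]
    refine Finset.sum_congr rfl fun i _ => ?_
    rw [dotProduct_comm y (v i)]
    ring
  have hμnn : ∀ i, 0 ≤ μ i := fun i => hSpsd.eigenvalues_nonneg i
  have hμle : ∀ i, μ i ≤ lam^2 := by
    intro i
    have h0 := hSle.dotProduct_mulVec_nonneg (v i)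
    have hstar : star (v i) = v i := by simp
    rw [hstar, sub_mulVec, smul_mulVec, one_mulVec, dotProduct_sub,
      dotProduct_smul, hSv i, dotProduct_smul, smul_eq_mul, smul_eq_mul, hvv i] at h0
    linarith
  set bb : Fin d → ℝ := fun i => c / Real.sqrt d * Real.sqrt (μ i) with hbb
  have hbbnn : ∀ i, 0 ≤ bb i := by
    intro i
    have : (0:ℝ) ≤ c / Real.sqrt d := by positivity
    exact mul_nonneg this (Real.sqrt_nonneg _)
  set m : Fin d → ℝ := fun i => v i ⬝ᵥ θb with hm
  set h : Fin d → (Fin d → ℝ) → ℝ := fun i x => max (|v i ⬝ᵥ x - m i| - bb i) 0 with hh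
  -- pointwise key estimate
  have key : ∀ (e : E) (x : Fin d → ℝ),
      φ e ⬝ᵥ (x - θb) - c * Real.sqrt (φ e ⬝ᵥ S.mulVec (φ e)) ≤ ∑ i, h i x := by
    intro e x
    set α : Fin d → ℝ := fun i => v i ⬝ᵥ φ e with hα
    set z : Fin d → ℝ := fun i => v i ⬝ᵥ (x - θb) with hz
    have h1 : φ e ⬝ᵥ (x - θb) = ∑ i, α i * z i := by
      rw [hPar (φ e) (x - θb)]
      refine Finset.sum_congr rfl fun i _ => ?_
      rw [dotProduct_comm (φ e) (v i)]
    have h2 : φ e ⬝ᵥ S.mulVec (φ e) = ∑ i, μ i * α i ^ 2 := by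
      rw [hquad (φ e)]
    have hαsq : ∑ i, α i ^ 2 ≤ 1 := by
      have hnn : (0:ℝ) ≤ φ e ⬝ᵥ φ e := by
        rw [hnorm (φ e)]
        positivity
      have := hφ e
      have h3 := Real.sq_sqrt hnn
      rw [← hnorm (φ e)] at *
      nlinarith [Real.sqrt_nonneg (φ e ⬝ᵥ φ e)]
    have hα1 : ∀ i, |α i| ≤ 1 := by
      intro i
      have h4 : α i ^ 2 ≤ 1 := by
        have h5 : α i ^ 2 ≤ ∑ j, α j ^ 2 :=
          Finset.single_le_sum (f := fun j => α j ^ 2) (fun j _ => sq_nonneg _)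
            (Finset.mem_univ i)
        linarith
      nlinarith [sq_abs (α i), abs_nonneg (α i)]
    -- Cauchy-Schwarz step
    have hCS : ∑ i, |α i| * Real.sqrt (μ i) ≤
        Real.sqrt d * Real.sqrt (∑ i, μ i * α i ^ 2) := by
      have h5 := Finset.sum_mul_sq_le_sq_mul_sq Finset.univ (fun _ => (1:ℝ))
        (fun i => |α i| * Real.sqrt (μ i))
      simp only [one_mul, one_pow] at h5
      have h6 : ∀ i : Fin d, (|α i| * Real.sqrt (μ i)) ^ 2 = μ i * α i ^ 2 := by
        intro i
        rw [mul_pow, sq_abs, Real.sq_sqrt (hμnn i)]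
        ring
      rw [Finset.sum_congr rfl (fun i _ => h6 i)] at h5
      simp only [Finset.sum_const, Finset.card_univ, Fintype.card_fin, nsmul_eq_mul,
        mul_one] at h5
      have h7 : (0:ℝ) ≤ ∑ i, |α i| * Real.sqrt (μ i) :=
        Finset.sum_nonneg fun i _ => mul_nonneg (abs_nonneg _) (Real.sqrt_nonneg _)
      rw [← Real.sqrt_mul hdpos.le]
      have h8 : (0:ℝ) ≤ (d:ℝ) * ∑ i, μ i * α i ^ 2 :=
        mul_nonneg hdpos.le (Finset.sum_nonneg fun i _ => mul_nonneg (hμnn i) (sq_nonneg _))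
      exact (Real.le_sqrt h7 h8).mpr h5
    have hbbsum : ∑ i, bb i * |α i| ≤ c * Real.sqrt (φ e ⬝ᵥ S.mulVec (φ e)) := by
      have hsd : (0:ℝ) < Real.sqrt d := Real.sqrt_pos.mpr hdpos
      have : ∑ i, bb i * |α i| = c / Real.sqrt d * ∑ i, |α i| * Real.sqrt (μ i) := by
        rw [Finset.mul_sum]
        refine Finset.sum_congr rfl fun i _ => ?_
        rw [hbb]
        ring
      rw [this, h2]
      calc c / Real.sqrt d * ∑ i, |α i| * Real.sqrt (μ i)
          ≤ c / Real.sqrt d * (Real.sqrt d * Real.sqrt (∑ i, μ i * α i ^ 2)) := by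
            apply mul_le_mul_of_nonneg_left hCS (by positivity)
        _ = c * Real.sqrt (∑ i, μ i * α i ^ 2) := by
            field_simp
    have hterm : ∀ i, α i * z i - bb i * |α i| ≤ h i x := by
      intro i
      have hzi : z i = v i ⬝ᵥ x - m i := by
        simp only [hz, hm]
        rw [dotProduct_sub]
      have h8 : α i * z i ≤ |α i| * |z i| := by
        calc α i * z i ≤ |α i * z i| := le_abs_self _
          _ = |α i| * |z i| := abs_mul _ _
      have h9 : |α i| * |z i| - bb i * |α i| = |α i| * (|z i| - bb i) := by ring
      have h10 : |α i| * (|z i| - bb i) ≤ max (|z i| - bb i) 0 := by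
        rcases le_or_gt 0 (|z i| - bb i) with hpos | hneg
        · calc |α i| * (|z i| - bb i) ≤ 1 * (|z i| - bb i) :=
              mul_le_mul_of_nonneg_right (hα1 i) hpos
            _ = |z i| - bb i := one_mul _
            _ ≤ max (|z i| - bb i) 0 := le_max_left _ _
        · have : |α i| * (|z i| - bb i) ≤ 0 :=
            mul_nonpos_of_nonneg_of_nonpos (abs_nonneg _) hneg.le
          exact this.trans (le_max_right _ _)
      rw [hh]
      simp only [← hzi]
      linarith
    calc φ e ⬝ᵥ (x - θb) - c * Real.sqrt (φ e ⬝ᵥ S.mulVec (φ e))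
        ≤ (∑ i, α i * z i) - ∑ i, bb i * |α i| := by
          rw [h1]
          linarith [hbbsum]
      _ = ∑ i, (α i * z i - bb i * |α i|) := by rw [Finset.sum_sub_distrib]
      _ ≤ ∑ i, h i x := Finset.sum_le_sum fun i _ => hterm i
  -- measurability and distribution of the projections
  have hLmeas : ∀ i, Measurable (fun x : Fin d → ℝ => v i ⬝ᵥ x) := by
    intro i
    exact Finset.measurable_sum _ (fun k _ => (measurable_pi_apply k).const_mul _)
  have hmap : ∀ i, ν.map (fun x => v i ⬝ᵥ x) = gaussianReal (m i) (Real.toNNReal (μ i)) := by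
    intro i
    have hvar : v i ⬝ᵥ S.mulVec (v i) = μ i := by
      rw [hviSy i (v i), hvv i, mul_one]
    have := hν (v i)
    rw [hvar] at this
    exact this
  have hint : ∀ i, Integrable (fun x => h i x) ν := by
    intro i
    have h2 := (integrable_map_measure (gauss_meas (m i) (bb i)).aestronglyMeasurable
      (hLmeas i).aemeasurable).mp (by
        rw [hmap i]
        exact gauss_integrable (m i) (Real.toNNReal (μ i)) (bb i))
    exact h2
  have hival : ∀ i, ∫ x, h i x ∂ν ≤
      2 * lam / Real.sqrt (2 * Real.pi) * Real.exp (-c ^ 2 / (2 * d)) := by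
    intro i
    have hstep : ∫ x, h i x ∂ν
        = ∫ y, max (|y - m i| - bb i) 0 ∂(gaussianReal (m i) (Real.toNNReal (μ i))) := by
      rw [← hmap i, integral_map (hLmeas i).aemeasurable
        (gauss_meas (m i) (bb i)).aestronglyMeasurable]
    rw [hstep]
    have hgb := gauss_bound (m i) (Real.toNNReal (μ i)) (hbbnn i)
    have hcoe : ((Real.toNNReal (μ i) : ℝ≥0) : ℝ) = μ i := Real.coe_toNNReal _ (hμnn i)
    rw [hcoe] at hgb
    refine hgb.trans ?_
    -- per-coordinate arithmetic bound
    rcases eq_or_lt_of_le (hμnn i) with hz | hpos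
    · rw [← hz]
      simp only [Real.sqrt_zero, mul_zero, zero_div, zero_mul]
      positivity
    · have hsq : Real.sqrt (μ i) ≤ lam := by
        have := Real.sqrt_le_sqrt (hμle i)
        rwa [Real.sqrt_sq hlam.le] at this
      have hexp : -(bb i) ^ 2 / (2 * μ i) = -c ^ 2 / (2 * d) := by
        rw [hbb]
        have h1 : (c / Real.sqrt d * Real.sqrt (μ i)) ^ 2 = c ^ 2 / d * μ i := by
          rw [mul_pow, div_pow, Real.sq_sqrt hdpos.le, Real.sq_sqrt (hμnn i)]
        rw [h1]
        field_simp
      rw [hexp]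
      have h2 : 2 * Real.sqrt (μ i) / Real.sqrt (2 * Real.pi)
          ≤ 2 * lam / Real.sqrt (2 * Real.pi) := by
        gcongr
      exact mul_le_mul_of_nonneg_right h2 (Real.exp_nonneg _)
  -- put everything together
  set F : (Fin d → ℝ) → ℝ := fun x =>
    ((Finset.univ.filter fun A : Finset E => A.card ≤ K).sup'
      ⟨∅, by simp⟩
      fun A => ∑ e ∈ A, (φ e ⬝ᵥ (x - θb) - c * Real.sqrt (φ e ⬝ᵥ S.mulVec (φ e)))) with hF
  have hempty : (∅ : Finset E) ∈ Finset.univ.filter fun A : Finset E => A.card ≤ K := by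
    simp
  have hg0nn : ∀ x, (0:ℝ) ≤ ∑ i, h i x := by
    intro x
    exact Finset.sum_nonneg fun i _ => le_max_right _ _
  have hFnn : ∀ x, 0 ≤ F x := by
    intro x
    have h0 := Finset.le_sup' (f := fun A : Finset E =>
      ∑ e ∈ A, (φ e ⬝ᵥ (x - θb) - c * Real.sqrt (φ e ⬝ᵥ S.mulVec (φ e)))) hempty
    rw [Finset.sum_empty] at h0
    exact h0
  have hFle : ∀ x, F x ≤ (K:ℝ) * ∑ i, h i x := by
    intro x
    rw [hF]
    apply Finset.sup'_le
    intro A hA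
    have hcard : A.card ≤ K := (Finset.mem_filter.mp hA).2
    calc ∑ e ∈ A, (φ e ⬝ᵥ (x - θb) - c * Real.sqrt (φ e ⬝ᵥ S.mulVec (φ e)))
        ≤ ∑ _e ∈ A, ∑ i, h i x := Finset.sum_le_sum fun e _ => key e x
      _ = (A.card : ℝ) * ∑ i, h i x := by rw [Finset.sum_const, nsmul_eq_mul]
      _ ≤ (K:ℝ) * ∑ i, h i x := by
          exact mul_le_mul_of_nonneg_right (by exact_mod_cast hcard) (hg0nn x)
  have hintsum : Integrable (fun x => ∑ i, h i x) ν :=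
    integrable_finset_sum _ fun i _ => hint i
  calc ∫ x, F x ∂ν ≤ ∫ x, (K:ℝ) * ∑ i, h i x ∂ν := by
        refine integral_mono_of_nonneg (Filter.Eventually.of_forall hFnn)
          (hintsum.const_mul _) (Filter.Eventually.of_forall hFle)
    _ = (K:ℝ) * ∑ i, ∫ x, h i x ∂ν := by
        rw [integral_const_mul, integral_finset_sum _ fun i _ => hint i]
    _ ≤ (K:ℝ) * ∑ _i : Fin d, (2 * lam / Real.sqrt (2 * Real.pi)
          * Real.exp (-c ^ 2 / (2 * d))) := by
        refine mul_le_mul_of_nonneg_left (Finset.sum_le_sum fun i _ => hival i)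
          (by positivity)
    _ = 2 * d * K * lam / Real.sqrt (2 * Real.pi) * Real.exp (-c ^ 2 / (2 * d)) := by
        rw [Finset.sum_const, Finset.card_univ, Fintype.card_fin, nsmul_eq_mul]
        ring
end

section
/- Fix λ, σ, c > 0, θ* ∈ ℝ^d, a finite ground set E with feature vectors φ_e ∈ ℝ^d satisfying ‖φ_e‖₂ ≤ 1, a family 𝒜 of subsets of E of size at most K, and mean weights w̄(e) = ⟨φ_e, θ*⟩. Suppose sets A^t ∈ 𝒜, weight observations w_t(e) for e ∈ A^t (t = 1,…,n), and the statistics Σ_t^{-1} = (1/λ²) I + (1/σ²) Σ_{τ<t} Σ_{e∈A^τ} φ_e φ_eᵀ and Σ_t^{-1} θ̄_t = (1/σ²) Σ_{τ<t} Σ_{e∈A^τ} φ_e w_τ(e) satisfy: (a) for all t ≤ n and all e ∈ E, |⟨φ_e, θ̄_t − θ*⟩| ≤ c √(φ_eᵀ Σ_t φ_e); and (b) each A^t exactly maximizes Σ_{e∈A} ŵ_t(e) over A ∈ 𝒜, where ŵ_t(e) = ⟨φ_e, θ̄_t⟩ + c √(φ_eᵀ Σ_t φ_e). Then for any A* ∈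 𝒜 maximizing Σ_{e∈A} w̄(e) over 𝒜: Σ_{t=1}^n [ Σ_{e∈A*} w̄(e) − Σ_{e∈A^t} w̄(e) ] ≤ 2 c K λ √( d n ln(1 + nKλ²/(dσ²)) / ln(1 + λ²/σ²) ). -/
open Matrix Finset

/-- The CombLinUCB covariance statistic:
Σ_t = ( (1/λ²) I + (1/σ²) Σ_{τ<t} Σ_{e∈A^τ} φ_e φ_eᵀ )⁻¹. -/
noncomputable def ucbSig {d L n : ℕ} (lam σ : ℝ) (φ : Fin L → Fin d → ℝ)
    (A : Fin n → Finset (Fin L)) (t : Fin n) : Matrix (Fin d) (Fin d) ℝ :=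
  ((lam ^ 2)⁻¹ • (1 : Matrix (Fin d) (Fin d) ℝ) +
    (σ ^ 2)⁻¹ • ∑ τ ∈ Finset.Iio t, ∑ e ∈ A τ, vecMulVec (φ e) (φ e))⁻¹

/-- The CombLinUCB mean statistic θ̄_t, i.e. the solution of
Σ_t⁻¹ θ̄_t = (1/σ²) Σ_{τ<t} Σ_{e∈A^τ} φ_e w_τ(e). -/
noncomputable def ucbTheta {d L n : ℕ} (lam σ : ℝ) (φ : Fin L → Fin d → ℝ)
    (A : Fin n → Finset (Fin L)) (w : Fin n → Fin L → ℝ) (t : Fin n) : Fin d → ℝ :=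
  (ucbSig lam σ φ A t).mulVec
    ((σ ^ 2)⁻¹ • ∑ τ ∈ Finset.Iio t, ∑ e ∈ A τ, w τ e • φ e)

/-- The UCB weight ŵ_t(e) = ⟨φ_e, θ̄_t⟩ + c √(φ_eᵀ Σ_t φ_e). -/
noncomputable def ucbWeight {d L n : ℕ} (lam σ c : ℝ) (φ : Fin L → Fin d → ℝ)
    (A : Fin n → Finset (Fin L)) (w : Fin n → Fin L → ℝ) (t : Fin n) (e : Fin L) : ℝ :=
  φ e ⬝ᵥ ucbTheta lam σ φ A w t +
    c * Real.sqrt (φ e ⬝ᵥ (ucbSig lam σ φ A t).mulVec (φ e))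

namespace Stmt16Aux

variable {d : ℕ}

lemma psd_vmv (v : Fin d → ℝ) : (vecMulVec v v).PosSemidef := by
  have h : vecMulVec v v = (replicateRow Unit v)ᴴ * replicateRow Unit v := by
    rw [vecMulVec_eq Unit, conjTranspose_replicateRow, star_trivial]
  rw [h]; exact posSemidef_conjTranspose_mul_self _

lemma psd_smul {A : Matrix (Fin d) (Fin d) ℝ} (hA : A.PosSemidef) {c : ℝ} (hc : 0 ≤ c) :
    (c • A).PosSemidef := by
  refine PosSemidef.of_dotProduct_mulVec_nonneg ?_ fun x => ?_
  · unfold Matrix.IsHermitian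
    rw [conjTranspose_smul, hA.1, star_trivial]
  · rw [smul_mulVec, dotProduct_smul]
    exact mul_nonneg hc (hA.dotProduct_mulVec_nonneg x)

lemma psd_sum {ι : Type*} (s : Finset ι) (f : ι → Matrix (Fin d) (Fin d) ℝ)
    (h : ∀ i ∈ s, (f i).PosSemidef) : (∑ i ∈ s, f i).PosSemidef := by
  classical
  induction s using Finset.induction with
  | empty => simpa using (Matrix.PosSemidef.zero (n := Fin d) (R := ℝ))
  | insert a s hni ih =>
      rw [Finset.sum_insert hni]
      exact (h _ (Finset.mem_insert_self _ _)).add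
        (ih fun i hi => h i (Finset.mem_insert_of_mem hi))

lemma posDef_smul_one {c : ℝ} (hc : 0 < c) :
    (c • (1 : Matrix (Fin d) (Fin d) ℝ)).PosDef := by
  rw [smul_one_eq_diagonal]
  exact posDef_diagonal_iff.mpr fun _ => hc

lemma one_le_det_one_add {C : Matrix (Fin d) (Fin d) ℝ} (hC : C.PosSemidef) :
    1 ≤ (1 + C).det := by
  classical
  have hH := hC.1
  set V : Matrix (Fin d) (Fin d) ℝ := (hH.eigenvectorUnitary : Matrix (Fin d) (Fin d) ℝ) with hV
  have hVV : V * star V = 1 := (Matrix.mem_unitaryGroup_iff).mp hH.eigenvectorUnitary.2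
  have hspec : C = V * diagonal (RCLike.ofReal ∘ hH.eigenvalues) * star V := hH.spectral_theorem
  have key : 1 + C = V * (1 + diagonal (RCLike.ofReal ∘ hH.eigenvalues)) * star V := by
    rw [Matrix.mul_add, Matrix.add_mul, Matrix.mul_one, hVV, ← hspec]
  have hdet : (1 + C).det = (1 + diagonal (RCLike.ofReal ∘ hH.eigenvalues)
      : Matrix (Fin d) (Fin d) ℝ).det := by
    rw [key]
    calc (V * (1 + diagonal (RCLike.ofReal ∘ hH.eigenvalues)) * star V).det
        = V.det * (1 + diagonal (RCLike.ofReal ∘ hH.eigenvalues)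
            : Matrix (Fin d) (Fin d) ℝ).det * (star V).det := by rw [det_mul, det_mul]
      _ = (1 + diagonal (RCLike.ofReal ∘ hH.eigenvalues)
            : Matrix (Fin d) (Fin d) ℝ).det * (V * star V).det := by rw [det_mul]; ring
      _ = _ := by rw [hVV, det_one, mul_one]
  rw [hdet]
  have : (1 + diagonal (RCLike.ofReal ∘ hH.eigenvalues) : Matrix (Fin d) (Fin d) ℝ)
      = diagonal (fun i => 1 + hH.eigenvalues i) := by
    rw [← diagonal_one, diagonal_add]
    congr 1
  rw [this, det_diagonal]
  calc (1:ℝ) = ∏ _i : Fin d, 1 := by simp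
    _ ≤ ∏ i, (1 + hH.eigenvalues i) :=
        Finset.prod_le_prod (fun i _ => zero_le_one)
          (fun i _ => by linarith [hC.eigenvalues_nonneg i])

open scoped MatrixOrder in
lemma det_le_det_add {A B : Matrix (Fin d) (Fin d) ℝ} (hA : A.PosDef) (hB : B.PosSemidef) :
    A.det ≤ (A + B).det := by
  classical
  set S := CFC.sqrt A with hSdef
  have hS : S.PosSemidef := (CFC.sqrt_nonneg A).posSemidef
  have hSS : S * S = A := CFC.sqrt_mul_sqrt_self A hA.posSemidef.nonneg
  have hdetS : S.det * S.det = A.det := by rw [← det_mul, hSS]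
  have hdetS0 : S.det ≠ 0 := by
    intro h
    have := hA.det_pos
    rw [← hdetS, h, mul_zero] at this
    exact lt_irrefl _ this
  have hSu : IsUnit S.det := isUnit_iff_ne_zero.mpr hdetS0
  have hSinv : S * S⁻¹ = 1 := mul_nonsing_inv _ hSu
  have hSinv' : S⁻¹ * S = 1 := nonsing_inv_mul _ hSu
  have hherm : (S⁻¹)ᴴ = S⁻¹ := by rw [conjTranspose_nonsing_inv, hS.1]
  set C := S⁻¹ * B * S⁻¹ with hCdef
  have hCpsd : C.PosSemidef := by
    have := hB.mul_mul_conjTranspose_same (S⁻¹)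
    rwa [hherm] at this
  have key : A + B = S * (1 + C) * S := by
    have h1 : S * C * S = B := by
      calc S * (S⁻¹ * B * S⁻¹) * S = S * S⁻¹ * B * (S⁻¹ * S) := by
            simp only [Matrix.mul_assoc]
        _ = B := by rw [hSinv, hSinv', Matrix.one_mul, Matrix.mul_one]
    rw [Matrix.mul_add, Matrix.add_mul, Matrix.mul_one, hSS, h1]
  rw [key, det_mul, det_mul]
  calc A.det = A.det * 1 := (mul_one _).symm
    _ ≤ A.det * (1 + C).det :=
        mul_le_mul_of_nonneg_left (one_le_det_one_add hCpsd) hA.det_pos.le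
    _ = S.det * (1 + C).det * S.det := by rw [← hdetS]; ring

lemma trace_eq_sum_eigs {G : Matrix (Fin d) (Fin d) ℝ} (hH : G.IsHermitian) :
    G.trace = ∑ i, hH.eigenvalues i := by
  classical
  set V : Matrix (Fin d) (Fin d) ℝ := (hH.eigenvectorUnitary : Matrix (Fin d) (Fin d) ℝ) with hV
  have hVV : star V * V = 1 := (Matrix.mem_unitaryGroup_iff').mp hH.eigenvectorUnitary.2
  have hspec : G = V * diagonal (RCLike.ofReal ∘ hH.eigenvalues) * star V := hH.spectral_theorem
  calc G.trace = (V * diagonal (RCLike.ofReal ∘ hH.eigenvalues) * star V).trace := by rw [← hspec]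
    _ = (star V * V * diagonal (RCLike.ofReal ∘ hH.eigenvalues)).trace := by
        rw [trace_mul_cycle]
    _ = (diagonal (RCLike.ofReal ∘ hH.eigenvalues)).trace := by rw [hVV, Matrix.one_mul]
    _ = ∑ i, hH.eigenvalues i := by simp [trace_diagonal]

lemma det_le_pow_trace (hd : 0 < d) {G : Matrix (Fin d) (Fin d) ℝ} (hG : G.PosDef) :
    G.det ≤ (G.trace / d) ^ d := by
  classical
  have hH := hG.isHermitian
  have hdet : G.det = ∏ i, hH.eigenvalues i := by
    rw [hH.det_eq_prod_eigenvalues]; norm_num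
  have htr : G.trace = ∑ i, hH.eigenvalues i := trace_eq_sum_eigs hH
  have heig : ∀ i, 0 ≤ hH.eigenvalues i := fun i => (hG.eigenvalues_pos i).le
  have hAMGM : (∏ i, hH.eigenvalues i) ^ ((d:ℝ)⁻¹) ≤ G.trace / d := by
    have h := Real.geom_mean_le_arith_mean_weighted univ (fun _ => (d:ℝ)⁻¹) hH.eigenvalues
      (fun _ _ => by positivity)
      (by simp [Finset.sum_const, card_univ]; field_simp)
      (fun i _ => heig i)
    rw [Real.finset_prod_rpow _ _ (fun i _ => heig i)] at h
    calc (∏ i, hH.eigenvalues i) ^ ((d:ℝ)⁻¹) ≤ ∑ i, (d:ℝ)⁻¹ * hH.eigenvalues i := h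
      _ = G.trace / d := by rw [htr, ← Finset.mul_sum]; ring
  have hprod0 : (0:ℝ) ≤ ∏ i, hH.eigenvalues i := Finset.prod_nonneg fun i _ => heig i
  have := pow_le_pow_left₀ (Real.rpow_nonneg hprod0 _) hAMGM d
  rw [← Real.rpow_natCast ((∏ i, hH.eigenvalues i) ^ ((d:ℝ)⁻¹)) d, ← Real.rpow_mul hprod0,
    inv_mul_cancel₀ (by exact_mod_cast hd.ne' : (d:ℝ) ≠ 0), Real.rpow_one] at this
  rw [hdet]
  exact this

lemma ratio_lemma {lam σ x : ℝ} (hlam : 0 < lam) (hσ : 0 < σ) (h0 : 0 ≤ x) (hx : x ≤ lam ^ 2) :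
    x * Real.log (1 + lam ^ 2 / σ ^ 2) ≤ lam ^ 2 * Real.log (1 + x / σ ^ 2) := by
  rcases eq_or_lt_of_le h0 with h | h
  · rw [← h]
    simp only [zero_mul, zero_div, add_zero, Real.log_one, mul_zero, le_refl]
  · have hcon := StrictConcaveOn.concaveOn strictConcaveOn_log_Ioi
    have hmem1 : (1 + lam ^ 2 / σ ^ 2 : ℝ) ∈ Set.Ioi (0:ℝ) := by
      simp only [Set.mem_Ioi]; positivity
    have hmem2 : (1 : ℝ) ∈ Set.Ioi (0:ℝ) := by norm_num
    have hw1 : (0:ℝ) ≤ x / lam ^ 2 := by positivity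
    have hw2 : (0:ℝ) ≤ 1 - x / lam ^ 2 := by
      have : x / lam ^ 2 ≤ 1 := by
        rw [div_le_one (by positivity)]; exact hx
      linarith
    have hsum : x / lam ^ 2 + (1 - x / lam ^ 2) = 1 := by ring
    have := hcon.2 hmem1 hmem2 hw1 hw2 hsum
    simp only [smul_eq_mul, mul_one, Real.log_one] at this
    have harg : x / lam ^ 2 * (1 + lam ^ 2 / σ ^ 2) + (1 - x / lam ^ 2) = 1 + x / σ ^ 2 := by
      field_simp
      ring
    rw [harg, mul_zero, add_zero] at this
    have := mul_le_mul_of_nonneg_left this (le_of_lt (by positivity : (0:ℝ) < lam ^ 2))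
    calc x * Real.log (1 + lam ^ 2 / σ ^ 2)
        = lam ^ 2 * (x / lam ^ 2 * Real.log (1 + lam ^ 2 / σ ^ 2)) := by
          field_simp
      _ ≤ lam ^ 2 * Real.log (1 + x / σ ^ 2) := this

lemma quad_bounds {G S : Matrix (Fin d) (Fin d) ℝ} {a b : ℝ} (ha : 0 < a) (hb : 0 ≤ b)
    (hS : S.PosSemidef) (hG : G = a⁻¹ • (1 : Matrix (Fin d) (Fin d) ℝ) + b • S)
    (hGpd : G.PosDef) (x : Fin d → ℝ) (hx : x ⬝ᵥ x ≤ 1) :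
    0 ≤ x ⬝ᵥ G⁻¹ *ᵥ x ∧ x ⬝ᵥ G⁻¹ *ᵥ x ≤ a := by
  set y := G⁻¹ *ᵥ x with hy
  have hudet : IsUnit G.det := isUnit_iff_ne_zero.mpr hGpd.det_pos.ne'
  have hGy : G *ᵥ y = x := by
    rw [hy, mulVec_mulVec, mul_nonsing_inv _ hudet, one_mulVec]
  have hq1 : y ⬝ᵥ (G *ᵥ y) = x ⬝ᵥ y := by rw [hGy, dotProduct_comm]
  have hSy : 0 ≤ y ⬝ᵥ (S *ᵥ y) := by
    have := hS.dotProduct_mulVec_nonneg y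
    rwa [star_trivial] at this
  have hq2 : a⁻¹ * (y ⬝ᵥ y) + b * (y ⬝ᵥ (S *ᵥ y)) = y ⬝ᵥ (G *ᵥ y) := by
    rw [hG, add_mulVec, smul_mulVec, smul_mulVec, one_mulVec, dotProduct_add,
      dotProduct_smul, dotProduct_smul, smul_eq_mul, smul_eq_mul]
  have hyy : 0 ≤ y ⬝ᵥ y := by
    unfold dotProduct
    exact Finset.sum_nonneg fun i _ => mul_self_nonneg _
  have hxx : 0 ≤ x ⬝ᵥ x := by
    unfold dotProduct
    exact Finset.sum_nonneg fun i _ => mul_self_nonneg _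
  have hlow : a⁻¹ * (y ⬝ᵥ y) ≤ x ⬝ᵥ y := by
    rw [← hq1, ← hq2]
    have := mul_nonneg hb hSy
    linarith
  have hq0 : 0 ≤ x ⬝ᵥ y := le_trans (by positivity) hlow
  have hcs : (x ⬝ᵥ y) ^ 2 ≤ (x ⬝ᵥ x) * (y ⬝ᵥ y) := by
    have h := Finset.sum_mul_sq_le_sq_mul_sq Finset.univ x y
    simpa [dotProduct, pow_two] using h
  refine ⟨hq0, ?_⟩
  have h1 : (x ⬝ᵥ y) ^ 2 ≤ y ⬝ᵥ y := by nlinarith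
  have h2 : y ⬝ᵥ y ≤ a * (x ⬝ᵥ y) := by
    have := mul_le_mul_of_nonneg_left hlow ha.le
    rw [← mul_assoc, mul_inv_cancel₀ ha.ne', one_mul] at this
    linarith
  nlinarith

lemma trace_vmv (v : Fin d → ℝ) : (vecMulVec v v).trace = v ⬝ᵥ v := by
  simp [vecMulVec, Matrix.trace, Matrix.diag, dotProduct]

lemma det_step {G : Matrix (Fin d) (Fin d) ℝ} (hG : G.PosDef) {b : ℝ} (hb : 0 ≤ b)
    {ι : Type*} (s : Finset ι) (v : ι → Fin d → ℝ) {e : ι} (he : e ∈ s) :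
    G.det * (1 + b * (v e ⬝ᵥ G⁻¹ *ᵥ v e)) ≤
      (G + b • ∑ f ∈ s, vecMulVec (v f) (v f)).det := by
  classical
  have hudet : IsUnit G.det := isUnit_iff_ne_zero.mpr hG.det_pos.ne'
  have hsplit : (∑ f ∈ s, vecMulVec (v f) (v f))
      = vecMulVec (v e) (v e) + ∑ f ∈ s.erase e, vecMulVec (v f) (v f) :=
    (Finset.add_sum_erase s _ he).symm
  rw [hsplit, smul_add, ← add_assoc]
  have hpd1 : (G + b • vecMulVec (v e) (v e)).PosDef :=
    hG.add_posSemidef (psd_smul (psd_vmv _) hb)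
  have hpsd2 : (b • ∑ f ∈ s.erase e, vecMulVec (v f) (v f)).PosSemidef :=
    psd_smul (psd_sum _ _ fun f _ => psd_vmv _) hb
  refine le_trans ?_ (det_le_det_add hpd1 hpsd2)
  have hcol : b • vecMulVec (v e) (v e) = replicateCol Unit (b • v e) * replicateRow Unit (v e) := by
    rw [vecMulVec_eq Unit]
    ext i j
    simp [Matrix.mul_apply, Matrix.replicateCol, Matrix.replicateRow]
    ring
  rw [hcol, Matrix.det_add_replicateCol_mul_replicateRow hudet]
  have hentry : (1 + replicateRow Unit (v e) * G⁻¹ * replicateCol Unit (b • v e)).det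
      = 1 + b * (v e ⬝ᵥ G⁻¹ *ᵥ v e) := by
    rw [det_unique, Matrix.add_apply, Matrix.one_apply_eq, ← Matrix.replicateRow_vecMul,
      Matrix.replicateRow_mul_replicateCol_apply]
    congr 1
    rw [dotProduct_smul, smul_eq_mul, ← Matrix.dotProduct_mulVec]
  rw [hentry]

/-- The ℕ-indexed Gram matrix. -/
noncomputable def Gm {d L n : ℕ} (lam σ : ℝ) (φ : Fin L → Fin d → ℝ)
    (A : Fin n → Finset (Fin L)) (t : ℕ) : Matrix (Fin d) (Fin d) ℝ :=
  (lam ^ 2)⁻¹ • (1 : Matrix (Fin d) (Fin d) ℝ) +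
    (σ ^ 2)⁻¹ • ∑ τ ∈ Finset.range t,
      (if h : τ < n then ∑ e ∈ A ⟨τ, h⟩, vecMulVec (φ e) (φ e) else 0)

lemma ucbSig_eq {d L n : ℕ} (lam σ : ℝ) (φ : Fin L → Fin d → ℝ)
    (A : Fin n → Finset (Fin L)) (t : Fin n) :
    ucbSig lam σ φ A t = (Gm lam σ φ A t.val)⁻¹ := by
  unfold ucbSig Gm
  congr 3
  refine Finset.sum_bij' (fun (a : Fin n) _ => a.val)
    (fun (b : ℕ) (hb : b ∈ Finset.range t.val) =>
      (⟨b, lt_trans (Finset.mem_range.mp hb) t.isLt⟩ : Fin n))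
    (fun a ha => Finset.mem_range.mpr (by exact_mod_cast Finset.mem_Iio.mp ha))
    (fun b hb => Finset.mem_Iio.mpr (by
      have hb' := Finset.mem_range.mp hb
      exact Fin.mk_lt_of_lt_val hb'))
    (fun a ha => rfl) (fun b hb => rfl) ?_
  intro a ha
  rw [dif_pos a.isLt]

end Stmt16Aux

set_option maxHeartbeats 1000000 in
/-- the deterministic 'good event' regret bound of the CombLinUCB analysis.
Under (a) the confidence inequalities |⟨φ_e, θ̄_t − θ*⟩| ≤ c √(φ_eᵀ Σ_t φ_e) and (b) exact
optimism of each played set A^t for the UCB weights ŵ_t, for any A* ∈ 𝒜 maximizing the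
mean weights w̄(e) = ⟨φ_e, θ*⟩:
Σ_{t=1}^n [ Σ_{e∈A*} w̄(e) − Σ_{e∈A^t} w̄(e) ]
  ≤ 2 c K λ √( d n ln(1 + nKλ²/(dσ²)) / ln(1 + λ²/σ²) ). -/
theorem stmt_16 {d L n K : ℕ} (hd : 0 < d) (hK : 1 ≤ K)
    (lam σ c : ℝ) (hlam : 0 < lam) (hσ : 0 < σ) (hc : 0 < c)
    (θs : Fin d → ℝ) (φ : Fin L → Fin d → ℝ)
    (hφ : ∀ e, Real.sqrt (φ e ⬝ᵥ φ e) ≤ 1)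
    (𝒜 : Finset (Finset (Fin L))) (h𝒜 : ∀ B ∈ 𝒜, B.card ≤ K)
    (A : Fin n → Finset (Fin L)) (hA : ∀ t, A t ∈ 𝒜)
    (w : Fin n → Fin L → ℝ)
    (hconf : ∀ t e, |φ e ⬝ᵥ (ucbTheta lam σ φ A w t - θs)| ≤
      c * Real.sqrt (φ e ⬝ᵥ (ucbSig lam σ φ A t).mulVec (φ e)))
    (hopt : ∀ t, ∀ B ∈ 𝒜,
      ∑ e ∈ B, ucbWeight lam σ c φ A w t e ≤ ∑ e ∈ A t, ucbWeight lam σ c φ A w t e)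
    (Astar : Finset (Fin L)) (hAstar : Astar ∈ 𝒜)
    (hAstarOpt : ∀ B ∈ 𝒜, ∑ e ∈ B, φ e ⬝ᵥ θs ≤ ∑ e ∈ Astar, φ e ⬝ᵥ θs) :
    ∑ t, ((∑ e ∈ Astar, φ e ⬝ᵥ θs) - ∑ e ∈ A t, φ e ⬝ᵥ θs) ≤
      2 * c * K * lam * Real.sqrt (d * n * Real.log (1 + n * K * lam ^ 2 / (d * σ ^ 2)) /
        Real.log (1 + lam ^ 2 / σ ^ 2)) := by
  classical
  open Stmt16Aux in
  have hσ2 : (0:ℝ) < σ ^ 2 := by positivity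
  have hlam2 : (0:ℝ) < lam ^ 2 := by positivity
  have hd' : (0:ℝ) < d := by exact_mod_cast hd
  -- the feature norms
  have hφ1 : ∀ e, φ e ⬝ᵥ φ e ≤ 1 := by
    intro e
    have h0 : 0 ≤ φ e ⬝ᵥ φ e := Finset.sum_nonneg fun i _ => mul_self_nonneg _
    nlinarith [Real.sq_sqrt h0, hφ e, Real.sqrt_nonneg (φ e ⬝ᵥ φ e)]
  -- positive definiteness of the Gram matrices
  have hpsdS : ∀ t : ℕ, (∑ τ ∈ Finset.range t,
      (if h : τ < n then ∑ e ∈ A ⟨τ, h⟩, vecMulVec (φ e) (φ e) else 0)).PosSemidef := by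
    intro t
    refine Stmt16Aux.psd_sum _ _ fun τ _ => ?_
    split
    · exact Stmt16Aux.psd_sum _ _ fun e _ => Stmt16Aux.psd_vmv _
    · exact Matrix.PosSemidef.zero
  have hGpd : ∀ t : ℕ, (Stmt16Aux.Gm lam σ φ A t).PosDef := by
    intro t
    unfold Stmt16Aux.Gm
    exact (Stmt16Aux.posDef_smul_one (by positivity)).add_posSemidef
      (Stmt16Aux.psd_smul (hpsdS t) (by positivity))
  -- the quadratic forms
  set q : Fin n → Fin L → ℝ :=
    fun t e => φ e ⬝ᵥ (Stmt16Aux.Gm lam σ φ A t.val)⁻¹ *ᵥ φ e with hqdef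
  have hq_sig : ∀ (t : Fin n) (e : Fin L),
      φ e ⬝ᵥ (ucbSig lam σ φ A t).mulVec (φ e) = q t e := by
    intro t e
    rw [hqdef, Stmt16Aux.ucbSig_eq]
  have hq_bounds : ∀ (t : Fin n) (e : Fin L), 0 ≤ q t e ∧ q t e ≤ lam ^ 2 := by
    intro t e
    exact Stmt16Aux.quad_bounds hlam2 (by positivity : (0:ℝ) ≤ (σ^2)⁻¹) (hpsdS t.val) rfl
      (hGpd t.val) (φ e) (hφ1 e)
  -- maximal quadratic form in each round
  set M : Fin n → ℝ :=
    fun t => if h : (A t).Nonempty then (A t).sup' h (q t) else 0 with hMdef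
  have hMeq : ∀ (t : Fin n) (h : (A t).Nonempty), M t = (A t).sup' h (q t) :=
    fun t h => dif_pos h
  have hMempty : ∀ (t : Fin n), ¬(A t).Nonempty → M t = 0 := fun t h => dif_neg h
  have hM0 : ∀ t, 0 ≤ M t := by
    intro t
    by_cases h : (A t).Nonempty
    · obtain ⟨e, he⟩ := h
      rw [hMeq t ⟨e, he⟩]
      exact le_trans (hq_bounds t e).1 (Finset.le_sup' _ he)
    · rw [hMempty t h]
  have hMlam : ∀ t, M t ≤ lam ^ 2 := by
    intro t
    by_cases h : (A t).Nonempty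
    · rw [hMeq t h]
      exact Finset.sup'_le _ _ fun e _ => (hq_bounds t e).2
    · rw [hMempty t h]; positivity
  have hqM : ∀ (t : Fin n), ∀ e ∈ A t, q t e ≤ M t := by
    intro t e he
    rw [hMeq t ⟨e, he⟩]
    exact Finset.le_sup' _ he
  -- per-round regret bound
  have hreg : ∀ t : Fin n, (∑ e ∈ Astar, φ e ⬝ᵥ θs) - ∑ e ∈ A t, φ e ⬝ᵥ θs
      ≤ 2 * c * K * Real.sqrt (M t) := by
    intro t
    have hlb : ∀ e, φ e ⬝ᵥ θs ≤ ucbWeight lam σ c φ A w t e := by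
      intro e
      have h := (abs_le.mp (hconf t e)).1
      rw [dotProduct_sub] at h
      unfold ucbWeight
      linarith
    have hub : ∀ e, ucbWeight lam σ c φ A w t e
        ≤ φ e ⬝ᵥ θs + 2 * c * Real.sqrt (q t e) := by
      intro e
      have h := (abs_le.mp (hconf t e)).2
      rw [dotProduct_sub] at h
      unfold ucbWeight
      rw [hq_sig t e] at h ⊢
      linarith
    have h1 : ∑ e ∈ Astar, φ e ⬝ᵥ θs ≤ ∑ e ∈ Astar, ucbWeight lam σ c φ A w t e :=
      Finset.sum_le_sum fun e _ => hlb e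
    have h2 := hopt t Astar hAstar
    have h3 : ∑ e ∈ A t, ucbWeight lam σ c φ A w t e
        ≤ ∑ e ∈ A t, (φ e ⬝ᵥ θs + 2 * c * Real.sqrt (M t)) := by
      refine Finset.sum_le_sum fun e he => ?_
      refine le_trans (hub e) ?_
      have : Real.sqrt (q t e) ≤ Real.sqrt (M t) := Real.sqrt_le_sqrt (hqM t e he)
      nlinarith [hc.le, this]
    rw [Finset.sum_add_distrib, Finset.sum_const] at h3
    have hcard : ((A t).card : ℝ) ≤ (K : ℝ) := by exact_mod_cast h𝒜 _ (hA t)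
    have hsqnn : (0:ℝ) ≤ 2 * c * Real.sqrt (M t) := by positivity
    have h4 : ((A t).card : ℝ) * (2 * c * Real.sqrt (M t)) ≤
        (K : ℝ) * (2 * c * Real.sqrt (M t)) :=
      mul_le_mul_of_nonneg_right hcard hsqnn
    rw [nsmul_eq_mul] at h3
    have := le_trans h1 (le_trans h2 h3)
    nlinarith [this, h4]
  -- the determinant step
  have hstep : ∀ t : Fin n, Real.log (1 + (σ ^ 2)⁻¹ * M t) ≤
      Real.log (Stmt16Aux.Gm lam σ φ A (t.val + 1)).det -
        Real.log (Stmt16Aux.Gm lam σ φ A t.val).det := by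
    intro t
    have hGsucc : Stmt16Aux.Gm lam σ φ A (t.val + 1) = Stmt16Aux.Gm lam σ φ A t.val +
        (σ ^ 2)⁻¹ • ∑ e ∈ A t, vecMulVec (φ e) (φ e) := by
      unfold Stmt16Aux.Gm
      rw [Finset.sum_range_succ, dif_pos t.isLt, Fin.eta, smul_add, add_assoc]
    by_cases h : (A t).Nonempty
    · obtain ⟨e0, he0, hMe⟩ := Finset.exists_mem_eq_sup' h (q t)
      have hMe' : M t = q t e0 := by rw [hMeq t h, hMe]
      have hds := Stmt16Aux.det_step (hGpd t.val)
        (by positivity : (0:ℝ) ≤ (σ ^ 2)⁻¹) (A t) (fun e => φ e) he0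
      rw [← hGsucc] at hds
      have hpos1 : 0 < (Stmt16Aux.Gm lam σ φ A t.val).det := (hGpd t.val).det_pos
      have hq0 : 0 ≤ q t e0 := (hq_bounds t e0).1
      have hfac : (0:ℝ) < 1 + (σ ^ 2)⁻¹ * q t e0 := by positivity
      have hlog := Real.log_le_log (by positivity) hds
      rw [Real.log_mul hpos1.ne' hfac.ne'] at hlog
      rw [hMe']
      linarith
    · rw [hMempty t h, mul_zero, add_zero, Real.log_one]
      rw [Finset.not_nonempty_iff_eq_empty] at h
      rw [hGsucc, h, Finset.sum_empty, smul_zero, add_zero, sub_self]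
  -- telescoping the determinant inequality
  set D : ℝ := Real.log (1 + n * K * lam ^ 2 / (d * σ ^ 2)) with hDdef
  set L0 : ℝ := Real.log (1 + lam ^ 2 / σ ^ 2) with hL0def
  have hL0 : 0 < L0 := by
    rw [hL0def]
    apply Real.log_pos
    have : (0:ℝ) < lam ^ 2 / σ ^ 2 := by positivity
    linarith
  have hlogdet : Real.log (Stmt16Aux.Gm lam σ φ A n).det -
      Real.log (Stmt16Aux.Gm lam σ φ A 0).det ≤ d * D := by
    have hdet0 : (Stmt16Aux.Gm lam σ φ A 0 : Matrix (Fin d) (Fin d) ℝ).det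
        = ((lam ^ 2)⁻¹) ^ d := by
      unfold Stmt16Aux.Gm
      rw [Finset.range_zero, Finset.sum_empty, smul_zero, add_zero, det_smul, det_one, mul_one,
        Fintype.card_fin]
    -- trace bound
    have htrS : (∑ τ ∈ Finset.range n,
        (if h : τ < n then ∑ e ∈ A ⟨τ, h⟩, vecMulVec (φ e) (φ e) else 0)).trace
        ≤ (n : ℝ) * K := by
      rw [Matrix.trace_sum]
      calc ∑ τ ∈ Finset.range n, (if h : τ < n then
              ∑ e ∈ A ⟨τ, h⟩, vecMulVec (φ e) (φ e) else 0).trace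
          ≤ ∑ τ ∈ Finset.range n, (K : ℝ) := by
            refine Finset.sum_le_sum fun τ hτ => ?_
            rw [dif_pos (Finset.mem_range.mp hτ), Matrix.trace_sum]
            calc ∑ e ∈ A ⟨τ, _⟩, (vecMulVec (φ e) (φ e)).trace
                ≤ ∑ e ∈ A ⟨τ, Finset.mem_range.mp hτ⟩, (1:ℝ) := by
                  refine Finset.sum_le_sum fun e _ => ?_
                  rw [Stmt16Aux.trace_vmv]
                  exact hφ1 e
              _ = ((A ⟨τ, Finset.mem_range.mp hτ⟩).card : ℝ) := by
                  rw [Finset.sum_const, nsmul_eq_mul, mul_one]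
              _ ≤ (K : ℝ) := by exact_mod_cast h𝒜 _ (hA _)
        _ = (n : ℝ) * K := by rw [Finset.sum_const, Finset.card_range, nsmul_eq_mul]
    have htrS0 : 0 ≤ (∑ τ ∈ Finset.range n,
        (if h : τ < n then ∑ e ∈ A ⟨τ, h⟩, vecMulVec (φ e) (φ e) else 0)).trace := by
      have h := hpsdS n
      rw [Stmt16Aux.trace_eq_sum_eigs h.1]
      exact Finset.sum_nonneg fun i _ => h.eigenvalues_nonneg i
    have htr : (Stmt16Aux.Gm lam σ φ A n).trace ≤ d * (lam ^ 2)⁻¹ + (σ ^ 2)⁻¹ * (n * K) := by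
      unfold Stmt16Aux.Gm
      rw [Matrix.trace_add, Matrix.trace_smul, Matrix.trace_smul, Matrix.trace_one,
        Fintype.card_fin]
      have := mul_le_mul_of_nonneg_left htrS (by positivity : (0:ℝ) ≤ (σ ^ 2)⁻¹)
      simp only [smul_eq_mul]
      nlinarith [this]
    have htrlo : (d : ℝ) * (lam ^ 2)⁻¹ ≤ (Stmt16Aux.Gm lam σ φ A n).trace := by
      unfold Stmt16Aux.Gm
      rw [Matrix.trace_add, Matrix.trace_smul, Matrix.trace_smul, Matrix.trace_one,
        Fintype.card_fin]
      simp only [smul_eq_mul]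
      nlinarith [mul_le_mul_of_nonneg_left htrS0 (by positivity : (0:ℝ) ≤ (σ ^ 2)⁻¹)]
    have htrpos : (0:ℝ) < (Stmt16Aux.Gm lam σ φ A n).trace :=
      lt_of_lt_of_le (by positivity) htrlo
    have hdetn := Stmt16Aux.det_le_pow_trace hd (hGpd n)
    have h1 : Real.log (Stmt16Aux.Gm lam σ φ A n).det
        ≤ (d:ℝ) * Real.log ((Stmt16Aux.Gm lam σ φ A n).trace / d) := by
      have := Real.log_le_log (hGpd n).det_pos hdetn
      rwa [Real.log_pow] at this
    have h2 : Real.log (Stmt16Aux.Gm lam σ φ A 0).det = (d:ℝ) * Real.log (lam ^ 2)⁻¹ := by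
      rw [hdet0, Real.log_pow]
    have h3 : Real.log ((Stmt16Aux.Gm lam σ φ A n).trace / d) - Real.log (lam ^ 2)⁻¹
        = Real.log ((Stmt16Aux.Gm lam σ φ A n).trace / d * lam ^ 2) := by
      rw [Real.log_mul (by positivity) hlam2.ne', Real.log_inv]
      ring
    have h4 : (Stmt16Aux.Gm lam σ φ A n).trace / d * lam ^ 2
        ≤ 1 + n * K * lam ^ 2 / (d * σ ^ 2) := by
      calc (Stmt16Aux.Gm lam σ φ A n).trace / d * lam ^ 2
          ≤ (d * (lam ^ 2)⁻¹ + (σ ^ 2)⁻¹ * (n * K)) / d * lam ^ 2 := by gcongr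
        _ = 1 + n * K * lam ^ 2 / (d * σ ^ 2) := by
            field_simp
      
    have h5 : Real.log ((Stmt16Aux.Gm lam σ φ A n).trace / d * lam ^ 2) ≤ D := by
      rw [hDdef]
      exact Real.log_le_log (by positivity) h4
    calc Real.log (Stmt16Aux.Gm lam σ φ A n).det - Real.log (Stmt16Aux.Gm lam σ φ A 0).det
        ≤ (d:ℝ) * Real.log ((Stmt16Aux.Gm lam σ φ A n).trace / d)
            - (d:ℝ) * Real.log (lam ^ 2)⁻¹ := by rw [h2]; linarith
      _ = (d:ℝ) * Real.log ((Stmt16Aux.Gm lam σ φ A n).trace / d * lam ^ 2) := by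
          rw [← h3]; ring
      _ ≤ (d:ℝ) * D := mul_le_mul_of_nonneg_left h5 hd'.le
  have hsumlog : ∑ t : Fin n, Real.log (1 + (σ ^ 2)⁻¹ * M t) ≤ d * D := by
    have h1 : ∑ t : Fin n, Real.log (1 + (σ ^ 2)⁻¹ * M t)
        ≤ ∑ t : Fin n, (Real.log (Stmt16Aux.Gm lam σ φ A (t.val + 1)).det -
            Real.log (Stmt16Aux.Gm lam σ φ A t.val).det) :=
      Finset.sum_le_sum fun t _ => hstep t
    have h2 : ∑ t : Fin n, (Real.log (Stmt16Aux.Gm lam σ φ A (t.val + 1)).det -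
        Real.log (Stmt16Aux.Gm lam σ φ A t.val).det)
        = Real.log (Stmt16Aux.Gm lam σ φ A n).det -
          Real.log (Stmt16Aux.Gm lam σ φ A 0).det := by
      rw [Fin.sum_univ_eq_sum_range (fun j => Real.log (Stmt16Aux.Gm lam σ φ A (j + 1)).det -
        Real.log (Stmt16Aux.Gm lam σ φ A j).det) n]
      exact Finset.sum_range_sub (fun j => Real.log (Stmt16Aux.Gm lam σ φ A j).det) n
    rw [h2] at h1
    exact le_trans h1 hlogdet
  -- sum of the maxima
  have hsumM : ∑ t : Fin n, M t ≤ lam ^ 2 * (d * D) / L0 := by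
    have h1 : ∀ t : Fin n, M t * L0 ≤ lam ^ 2 * Real.log (1 + (σ ^ 2)⁻¹ * M t) := by
      intro t
      have := Stmt16Aux.ratio_lemma hlam hσ (hM0 t) (hMlam t)
      rw [inv_mul_eq_div]
      rw [hL0def]
      exact this
    have h2 : (∑ t : Fin n, M t) * L0 ≤ lam ^ 2 * (d * D) := by
      rw [Finset.sum_mul]
      calc ∑ t : Fin n, M t * L0 ≤ ∑ t : Fin n, lam ^ 2 * Real.log (1 + (σ ^ 2)⁻¹ * M t) :=
            Finset.sum_le_sum fun t _ => h1 t
        _ = lam ^ 2 * ∑ t : Fin n, Real.log (1 + (σ ^ 2)⁻¹ * M t) := by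
            rw [Finset.mul_sum]
        _ ≤ lam ^ 2 * (d * D) := by nlinarith [hsumlog]
    rw [le_div_iff₀ hL0]
    exact h2
  -- final assembly
  have hM0sum : 0 ≤ ∑ t : Fin n, M t := Finset.sum_nonneg fun t _ => hM0 t
  have hcs : ∑ t : Fin n, Real.sqrt (M t) ≤ Real.sqrt (n * ∑ t : Fin n, M t) := by
    rw [Real.le_sqrt (Finset.sum_nonneg fun t _ => Real.sqrt_nonneg _)
      (mul_nonneg (Nat.cast_nonneg n) hM0sum)]
    calc (∑ t : Fin n, Real.sqrt (M t)) ^ 2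
        ≤ (Finset.univ : Finset (Fin n)).card * ∑ t : Fin n, Real.sqrt (M t) ^ 2 :=
          sq_sum_le_card_mul_sum_sq
      _ = n * ∑ t : Fin n, M t := by
          rw [Finset.card_univ, Fintype.card_fin]
          congr 1
          exact Finset.sum_congr rfl fun t _ => Real.sq_sqrt (hM0 t)
  have hfin1 : ∑ t, ((∑ e ∈ Astar, φ e ⬝ᵥ θs) - ∑ e ∈ A t, φ e ⬝ᵥ θs)
      ≤ 2 * c * K * ∑ t : Fin n, Real.sqrt (M t) := by
    rw [Finset.mul_sum]
    exact Finset.sum_le_sum fun t _ => by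
      have := hreg t
      linarith [this]
  have hKc : (0:ℝ) ≤ 2 * c * K := by positivity
  have hfin2 : (2 * c * (K:ℝ)) * ∑ t : Fin n, Real.sqrt (M t)
      ≤ 2 * c * K * Real.sqrt (n * (lam ^ 2 * (d * D) / L0)) := by
    refine mul_le_mul_of_nonneg_left ?_ hKc
    refine le_trans hcs (Real.sqrt_le_sqrt ?_)
    have hn0 : (0:ℝ) ≤ n := Nat.cast_nonneg n
    nlinarith [hsumM]
  have hsqrt_eq : Real.sqrt ((n:ℝ) * (lam ^ 2 * (d * D) / L0))
      = lam * Real.sqrt (d * n * D / L0) := by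
    have harg : (n:ℝ) * (lam ^ 2 * (d * D) / L0) = lam ^ 2 * (d * n * D / L0) := by
      ring
    rw [harg, Real.sqrt_mul (by positivity : (0:ℝ) ≤ lam ^ 2), Real.sqrt_sq hlam.le]
  calc ∑ t, ((∑ e ∈ Astar, φ e ⬝ᵥ θs) - ∑ e ∈ A t, φ e ⬝ᵥ θs)
      ≤ 2 * c * K * ∑ t : Fin n, Real.sqrt (M t) := hfin1
    _ ≤ 2 * c * K * Real.sqrt (n * (lam ^ 2 * (d * D) / L0)) := hfin2
    _ = 2 * c * K * lam * Real.sqrt (d * n * D / L0) := by rw [hsqrt_eq]; ring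
end

section
/- Fix λ, σ, c > 0, γ ∈ [0,1), θ* ∈ ℝ^d, a finite ground set E with feature vectors φ_e ∈ ℝ^d satisfying ‖φ_e‖₂ ≤ 1, a family 𝒜 of subsets of E of size at most K, and mean weights w̄(e) = ⟨φ_e, θ*⟩. Suppose sets A^t ∈ 𝒜, weight observations w_t(e) for e ∈ A^t (t = 1,…,n), and the statistics Σ_t^{-1} = (1/λ²) I + (1/σ²) Σ_{τ<t} Σ_{e∈A^τ} φ_e φ_eᵀ and Σ_t^{-1} θ̄_t = (1/σ²) Σ_{τ<t} Σ_{e∈A^τ} φ_e w_τ(e) satisfy: (a) for all t ≤ n and all e ∈ E, |⟨φ_e, θ̄_t − θ*⟩| ≤ c √(φ_eᵀ Σ_t φ_e); and (b) each A^t is a γ-approximate maximizer of the UCB weights, i.e., Σ_{e∈A^t} ŵ_t(e) ≥ (1−γ) max_{A∈𝒜} Σ_{e∈A} ŵ_t(e), where ŵ_t(e) = ⟨φ_e, θ̄_t⟩ + c √(φ_eᵀ Σ_t φ_e). Then for any A^opt ∈ 𝒜 maximizing Σ_{e∈A} w̄(e) over 𝒜: Σ_{t=1}^n [ Σ_{e∈A^opt}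 w̄(e) − (1/(1−γ)) Σ_{e∈A^t} w̄(e) ] ≤ (2 c K λ / (1−γ)) √( d n ln(1 + nKλ²/(dσ²)) / ln(1 + λ²/σ²) ). -/
open Matrix Finset

section AuxLemmas

lemma psd_vecMulVec {d : ℕ} (v : Fin d → ℝ) : (vecMulVec v v).PosSemidef := by
  apply Matrix.PosSemidef.of_dotProduct_mulVec_nonneg
  · ext i j
    simp [conjTranspose_apply, vecMulVec_apply, mul_comm]
  · intro x
    have h : star x ⬝ᵥ (vecMulVec v v *ᵥ x) = (v ⬝ᵥ x)^2 := by
      simp only [star_trivial, dotProduct, mulVec, vecMulVec_apply, Finset.mul_sum]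
      rw [sq, Finset.sum_mul_sum]
      exact Finset.sum_congr rfl fun i _ => Finset.sum_congr rfl fun j _ => by ring
    rw [h]; positivity

lemma herm_smul {d : ℕ} (c : ℝ) {M : Matrix (Fin d) (Fin d) ℝ} (hM : M.IsHermitian) :
    (c • M).IsHermitian := by
  have : (c • M)ᴴ = c • M := by rw [conjTranspose_smul, star_trivial, hM.eq]
  exact this

lemma psd_sum {d : ℕ} {ι : Type*} (s : Finset ι) (f : ι → Matrix (Fin d) (Fin d) ℝ)
    (hf : ∀ i ∈ s, (f i).PosSemidef) : (∑ i ∈ s, f i).PosSemidef := by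
  induction s using Finset.cons_induction with
  | empty => simpa using Matrix.PosSemidef.zero
  | cons a s ha ih =>
    rw [Finset.sum_cons]
    exact (hf a (Finset.mem_cons_self a s)).add (ih fun i hi => hf i (Finset.mem_cons.mpr (Or.inr hi)))

lemma psd_smul {d : ℕ} {c : ℝ} (hc : 0 ≤ c) {M : Matrix (Fin d) (Fin d) ℝ}
    (hM : M.PosSemidef) : (c • M).PosSemidef := by
  refine Matrix.PosSemidef.of_dotProduct_mulVec_nonneg (herm_smul c hM.1) fun x => ?_
  rw [smul_mulVec, dotProduct_smul]
  exact smul_nonneg hc (hM.dotProduct_mulVec_nonneg x)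

lemma pd_smul_one {d : ℕ} {c : ℝ} (hc : 0 < c) :
    (c • (1 : Matrix (Fin d) (Fin d) ℝ)).PosDef := by
  rw [Matrix.smul_one_eq_diagonal]
  exact Matrix.PosDef.diagonal fun _ => hc

lemma trace_eq_sum_eig {d : ℕ} {A : Matrix (Fin d) (Fin d) ℝ} (hA : A.IsHermitian) :
    A.trace = ∑ i, hA.eigenvalues i := by
  conv_lhs => rw [hA.spectral_theorem, Unitary.conjStarAlgAut_apply]
  rw [Matrix.trace_mul_cycle]
  rw [show (star (hA.eigenvectorUnitary : Matrix (Fin d) (Fin d) ℝ)) *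
      (hA.eigenvectorUnitary : Matrix (Fin d) (Fin d) ℝ) = 1 from
    Unitary.coe_star_mul_self _]
  simp [Matrix.trace_diagonal]

lemma one_add_sum_le_prod {ι : Type*} (s : Finset ι) (p : ι → ℝ) (hp : ∀ i ∈ s, 0 ≤ p i) :
    1 + ∑ i ∈ s, p i ≤ ∏ i ∈ s, (1 + p i) := by
  induction s using Finset.cons_induction with
  | empty => simp
  | cons a s ha ih =>
    rw [Finset.sum_cons, Finset.prod_cons]
    have hs : 0 ≤ ∑ i ∈ s, p i :=
      Finset.sum_nonneg fun i hi => hp i (Finset.mem_cons.mpr (Or.inr hi))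
    have ha' : 0 ≤ p a := hp a (Finset.mem_cons_self a s)
    have := ih fun i hi => hp i (Finset.mem_cons.mpr (Or.inr hi))
    nlinarith

lemma det_one_add_psd {d : ℕ} {P : Matrix (Fin d) (Fin d) ℝ} (hP : P.PosSemidef) :
    1 + P.trace ≤ (1 + P).det := by
  set U : Matrix (Fin d) (Fin d) ℝ := (hP.1.eigenvectorUnitary : Matrix (Fin d) (Fin d) ℝ) with hU
  have hUU : U * star U = 1 := Unitary.coe_mul_star_self _
  have hsp : (1 : Matrix (Fin d) (Fin d) ℝ) + P =
      U * (1 + diagonal (RCLike.ofReal ∘ hP.1.eigenvalues)) * star U := by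
    rw [mul_add, add_mul, mul_one, hUU]; congr 1; exact hP.1.spectral_theorem
  have hUU' : star U * U = 1 := Unitary.coe_star_mul_self _
  have hdet : (1 + P).det = ∏ i, (1 + hP.1.eigenvalues i) := by
    rw [hsp, Matrix.det_mul, Matrix.det_mul, mul_comm, ← mul_assoc, ← Matrix.det_mul, hUU']
    rw [show (1 : Matrix (Fin d) (Fin d) ℝ) + diagonal (RCLike.ofReal ∘ hP.1.eigenvalues) =
        diagonal (fun i => 1 + hP.1.eigenvalues i) by
      rw [← Matrix.diagonal_one, Matrix.diagonal_add]; rfl]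
    simp [Matrix.det_diagonal]
  rw [hdet, trace_eq_sum_eig hP.1]
  exact one_add_sum_le_prod _ _ fun i _ => hP.eigenvalues_nonneg i

lemma det_le_pow_trace {d : ℕ} (hd : 0 < d) {A : Matrix (Fin d) (Fin d) ℝ}
    (hA : A.PosSemidef) : A.det ≤ (A.trace / d) ^ d := by
  have hz : ∀ i ∈ Finset.univ, 0 ≤ hA.1.eigenvalues i := fun i _ => hA.eigenvalues_nonneg i
  have hw : ∀ i ∈ (Finset.univ : Finset (Fin d)), (0:ℝ) ≤ (d:ℝ)⁻¹ := fun _ _ => by positivity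
  have hw' : ∑ _i ∈ (Finset.univ : Finset (Fin d)), (d:ℝ)⁻¹ = 1 := by
    simp [Finset.card_univ]
    field_simp
  have key := Real.geom_mean_le_arith_mean_weighted Finset.univ (fun _ => (d:ℝ)⁻¹)
    hA.1.eigenvalues hw hw' hz
  have hdet : A.det = ∏ i, hA.1.eigenvalues i := by
    rw [hA.1.det_eq_prod_eigenvalues]; norm_num
  have htr : ∑ i, (d:ℝ)⁻¹ * hA.1.eigenvalues i = A.trace / d := by
    rw [trace_eq_sum_eig hA.1, ← Finset.mul_sum]; ring
  have hpow : (∏ i, hA.1.eigenvalues i ^ ((d:ℝ)⁻¹)) ^ d = ∏ i, hA.1.eigenvalues i := by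
    rw [← Finset.prod_pow]
    refine Finset.prod_congr rfl fun i _ => ?_
    rw [← Real.rpow_natCast (hA.1.eigenvalues i ^ ((d:ℝ)⁻¹)) d,
      ← Real.rpow_mul (hz i (Finset.mem_univ i))]
    rw [inv_mul_cancel₀ (by positivity : (d:ℝ) ≠ 0), Real.rpow_one]
  calc A.det = (∏ i, hA.1.eigenvalues i ^ ((d:ℝ)⁻¹)) ^ d := by rw [hpow, hdet]
    _ ≤ (A.trace / d) ^ d := by
        refine pow_le_pow_left₀ ?_ (htr ▸ key) d
        exact Finset.prod_nonneg fun i _ => Real.rpow_nonneg (hz i (Finset.mem_univ i)) _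

open scoped MatrixOrder in
lemma det_add_psd {d : ℕ} {M B : Matrix (Fin d) (Fin d) ℝ}
    (hM : M.PosDef) (hB : B.PosSemidef) :
    M.det * (1 + (M⁻¹ * B).trace) ≤ (M + B).det := by
  set R := CFC.sqrt M with hR
  have hRR : R * R = M := CFC.sqrt_mul_sqrt_self M (nonneg_iff_posSemidef.mpr hM.posSemidef)
  have hRherm : R.IsHermitian := (nonneg_iff_posSemidef.mp (CFC.sqrt_nonneg M)).1
  have hdetR : R.det * R.det = M.det := by rw [← Matrix.det_mul, hRR]
  have hRdet : IsUnit R.det := by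
    have := hM.det_pos
    refine isUnit_iff_ne_zero.mpr fun h => ?_
    rw [h, mul_zero] at hdetR
    exact this.ne hdetR
  have hRinv : R * R⁻¹ = 1 := Matrix.mul_nonsing_inv R hRdet
  have hRinv' : R⁻¹ * R = 1 := Matrix.nonsing_inv_mul R hRdet
  set P := R⁻¹ * B * R⁻¹ with hPdef
  have hPpsd : P.PosSemidef := by
    have h := hB.conjTranspose_mul_mul_same (R⁻¹)
    rwa [hRherm.inv.eq] at h
  have hMB : M + B = R * (1 + P) * R := by
    have hB' : R * (R⁻¹ * B * R⁻¹) * R = B := by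
      rw [show R * (R⁻¹ * B * R⁻¹) * R = (R * R⁻¹) * B * (R⁻¹ * R) from by noncomm_ring,
        hRinv, hRinv', one_mul, mul_one]
    rw [hPdef, mul_add, add_mul, mul_one, hRR, hB']
  have hMinv : M⁻¹ = R⁻¹ * R⁻¹ := by rw [← hRR, Matrix.mul_inv_rev]
  have htr : P.trace = (M⁻¹ * B).trace := by
    rw [hPdef, hMinv, Matrix.trace_mul_cycle]
  have hdet : (M + B).det = M.det * (1 + P).det := by
    rw [hMB, Matrix.det_mul, Matrix.det_mul, ← hdetR]; ring
  rw [hdet, ← htr]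
  exact mul_le_mul_of_nonneg_left (det_one_add_psd hPpsd) hM.det_pos.le

lemma trace_mul_vecMulVec {d : ℕ} (N : Matrix (Fin d) (Fin d) ℝ) (v : Fin d → ℝ) :
    (N * vecMulVec v v).trace = v ⬝ᵥ N.mulVec v := by
  simp only [Matrix.trace, Matrix.diag, Matrix.mul_apply, vecMulVec_apply, dotProduct,
    Matrix.mulVec, Finset.mul_sum]
  exact Finset.sum_congr rfl fun i _ => Finset.sum_congr rfl fun j _ => by ring

lemma quad_inv_bounds {d : ℕ} {lam : ℝ} (hlam : 0 < lam) {S : Matrix (Fin d) (Fin d) ℝ}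
    (hS : S.PosSemidef) (v : Fin d → ℝ) (hv : Real.sqrt (v ⬝ᵥ v) ≤ 1) :
    0 ≤ v ⬝ᵥ ((lam ^ 2)⁻¹ • (1 : Matrix (Fin d) (Fin d) ℝ) + S)⁻¹.mulVec v ∧
    v ⬝ᵥ ((lam ^ 2)⁻¹ • (1 : Matrix (Fin d) (Fin d) ℝ) + S)⁻¹.mulVec v ≤ lam ^ 2 := by
  set M := (lam ^ 2)⁻¹ • (1 : Matrix (Fin d) (Fin d) ℝ) + S with hMdef
  have hMpd : M.PosDef := by
    have h1 : ((lam ^ 2)⁻¹ • (1 : Matrix (Fin d) (Fin d) ℝ)).PosDef := by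
      rw [Matrix.smul_one_eq_diagonal]
      exact Matrix.PosDef.diagonal fun _ => by positivity
    exact h1.add_posSemidef hS
  have hMinvpd : M⁻¹.PosDef := hMpd.inv
  set u := M⁻¹.mulVec v with hu
  have hz0 : 0 ≤ v ⬝ᵥ u := by
    have := hMinvpd.posSemidef.dotProduct_mulVec_nonneg v
    simpa using this
  refine ⟨hz0, ?_⟩
  have hMu : M.mulVec u = v := by
    rw [hu, Matrix.mulVec_mulVec, Matrix.mul_nonsing_inv _ hMpd.det_pos.ne'.isUnit,
      Matrix.one_mulVec]
  have huMu : u ⬝ᵥ M.mulVec u = v ⬝ᵥ u := by rw [hMu, dotProduct_comm]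
  have hlow : (lam ^ 2)⁻¹ * (u ⬝ᵥ u) ≤ v ⬝ᵥ u := by
    have hSu : 0 ≤ u ⬝ᵥ S.mulVec u := by simpa using hS.dotProduct_mulVec_nonneg u
    have : u ⬝ᵥ M.mulVec u = (lam ^ 2)⁻¹ * (u ⬝ᵥ u) + u ⬝ᵥ S.mulVec u := by
      rw [hMdef, Matrix.add_mulVec, dotProduct_add, Matrix.smul_mulVec,
        Matrix.one_mulVec, dotProduct_smul]
      simp [smul_eq_mul]
    linarith [huMu ▸ this]
  have hcs : (v ⬝ᵥ u) ^ 2 ≤ (v ⬝ᵥ v) * (u ⬝ᵥ u) := by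
    simpa [dotProduct, sq] using Finset.sum_mul_sq_le_sq_mul_sq Finset.univ v u
  have hvv1 : v ⬝ᵥ v ≤ 1 := by
    have h0 : 0 ≤ v ⬝ᵥ v := Finset.sum_nonneg fun i _ => mul_self_nonneg (v i)
    nlinarith [Real.sq_sqrt h0, Real.sqrt_nonneg (v ⬝ᵥ v), hv]
  have huu0 : 0 ≤ u ⬝ᵥ u := Finset.sum_nonneg fun i _ => mul_self_nonneg (u i)
  have hl2 : (0:ℝ) < lam ^ 2 := by positivity
  have h6 : u ⬝ᵥ u ≤ lam ^ 2 * (v ⬝ᵥ u) := by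
    have h := mul_le_mul_of_nonneg_left hlow hl2.le
    rwa [← mul_assoc, mul_inv_cancel₀ hl2.ne', one_mul] at h
  have h7 : (v ⬝ᵥ u) ^ 2 ≤ u ⬝ᵥ u := le_trans hcs (by nlinarith [huu0, hvv1])
  have h5 : (v ⬝ᵥ u) * (v ⬝ᵥ u) ≤ lam ^ 2 * (v ⬝ᵥ u) := by rw [sq] at h7; linarith
  rcases eq_or_lt_of_le hz0 with h | h
  · linarith [h.symm]
  · exact le_of_mul_le_mul_right h5 h

lemma concave_log_bound {B s2 : ℝ} (hB : 0 < B) (hs2 : 0 < s2) {z : ℝ}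
    (hz0 : 0 ≤ z) (hzB : z ≤ B) :
    z * Real.log (1 + B / s2) ≤ B * Real.log (1 + z / s2) := by
  have hcc : ConcaveOn ℝ (Set.Ioi 0) Real.log := strictConcaveOn_log_Ioi.concaveOn
  have h1 : (1 : ℝ) ∈ Set.Ioi (0:ℝ) := by norm_num
  have h2 : 1 + B / s2 ∈ Set.Ioi (0:ℝ) := by
    have : 0 < B / s2 := by positivity
    simp [Set.mem_Ioi]; linarith
  have ha : 0 ≤ 1 - z / B := by
    rw [sub_nonneg, div_le_one hB]; exact hzB
  have hb : 0 ≤ z / B := by positivity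
  have hab : (1 - z / B) + z / B = 1 := by ring
  have key := hcc.2 h1 h2 ha hb hab
  have hcomb : (1 - z / B) • (1:ℝ) + (z / B) • (1 + B / s2) = 1 + z / s2 := by
    rw [smul_eq_mul, smul_eq_mul]
    field_simp
    ring
  rw [hcomb] at key
  have : (z / B) * Real.log (1 + B / s2) ≤ Real.log (1 + z / s2) := by
    simpa [Real.log_one, smul_eq_mul] using key
  calc z * Real.log (1 + B / s2) = B * ((z / B) * Real.log (1 + B / s2)) := by field_simp
    _ ≤ B * Real.log (1 + z / s2) := mul_le_mul_of_nonneg_left this hB.le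

lemma trace_psd_nonneg {d : ℕ} {M : Matrix (Fin d) (Fin d) ℝ} (hM : M.PosSemidef) :
    0 ≤ M.trace := by
  refine Finset.sum_nonneg fun i _ => ?_
  have h := hM.dotProduct_mulVec_nonneg (Pi.single i 1)
  simpa [Matrix.mulVec_single, dotProduct, Pi.single_apply, Finset.sum_ite_eq'] using h

lemma trace_vecMulVec {d : ℕ} (v : Fin d → ℝ) : (vecMulVec v v).trace = v ⬝ᵥ v := by
  simp [Matrix.trace, Matrix.diag, vecMulVec_apply, dotProduct]

lemma dot_self_le_one {d : ℕ} {v : Fin d → ℝ} (hv : Real.sqrt (v ⬝ᵥ v) ≤ 1) : v ⬝ᵥ v ≤ 1 := by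
  have h0 : 0 ≤ v ⬝ᵥ v := Finset.sum_nonneg fun i _ => mul_self_nonneg (v i)
  nlinarith [Real.sq_sqrt h0, Real.sqrt_nonneg (v ⬝ᵥ v)]

end AuxLemmas

set_option maxHeartbeats 2000000 in
/-- the deterministic 'good event' scaled regret bound for CombLinUCB with a
γ-approximate maximization oracle. Under (a) the confidence inequalities
|⟨φ_e, θ̄_t − θ*⟩| ≤ c √(φ_eᵀ Σ_t φ_e) and (b) γ-approximate optimism
Σ_{e∈A^t} ŵ_t(e) ≥ (1−γ) max_{A∈𝒜} Σ_{e∈A} ŵ_t(e), for any A^opt ∈ 𝒜 maximizing the mean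
weights w̄(e) = ⟨φ_e, θ*⟩:
Σ_{t=1}^n [ Σ_{e∈A^opt} w̄(e) − (1/(1−γ)) Σ_{e∈A^t} w̄(e) ]
  ≤ (2 c K λ/(1−γ)) √( d n ln(1 + nKλ²/(dσ²)) / ln(1 + λ²/σ²) ). -/
theorem stmt_17 {d L n K : ℕ} (hd : 0 < d) (hK : 1 ≤ K)
    (lam σ c γ : ℝ) (hlam : 0 < lam) (hσ : 0 < σ) (hc : 0 < c)
    (hγ : γ ∈ Set.Ico (0 : ℝ) 1)
    (θs : Fin d → ℝ) (φ : Fin L → Fin d → ℝ)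
    (hφ : ∀ e, Real.sqrt (φ e ⬝ᵥ φ e) ≤ 1)
    (𝒜 : Finset (Finset (Fin L))) (h𝒜 : ∀ B ∈ 𝒜, B.card ≤ K)
    (A : Fin n → Finset (Fin L)) (hA : ∀ t, A t ∈ 𝒜)
    (w : Fin n → Fin L → ℝ)
    (hconf : ∀ t e, |φ e ⬝ᵥ (ucbTheta lam σ φ A w t - θs)| ≤
      c * Real.sqrt (φ e ⬝ᵥ (ucbSig lam σ φ A t).mulVec (φ e)))
    (hopt : ∀ t, ∀ B ∈ 𝒜,
      (1 - γ) * ∑ e ∈ B, ucbWeight lam σ c φ A w t e ≤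
        ∑ e ∈ A t, ucbWeight lam σ c φ A w t e)
    (Aopt : Finset (Fin L)) (hAopt : Aopt ∈ 𝒜)
    (hAoptOpt : ∀ B ∈ 𝒜, ∑ e ∈ B, φ e ⬝ᵥ θs ≤ ∑ e ∈ Aopt, φ e ⬝ᵥ θs) :
    ∑ t, ((∑ e ∈ Aopt, φ e ⬝ᵥ θs) - (1 - γ)⁻¹ * ∑ e ∈ A t, φ e ⬝ᵥ θs) ≤
      2 * c * K * lam / (1 - γ) *
        Real.sqrt (d * n * Real.log (1 + n * K * lam ^ 2 / (d * σ ^ 2)) /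
          Real.log (1 + lam ^ 2 / σ ^ 2)) := by
  
  classical
  obtain ⟨hγ0, hγ1⟩ := hγ
  have h1γ : (0:ℝ) < 1 - γ := by linarith
  have hσ2 : (0:ℝ) < σ ^ 2 := by positivity
  have hl2 : (0:ℝ) < lam ^ 2 := by positivity
  have hK0 : (0:ℝ) < (K:ℝ) := by exact_mod_cast hK
  have hd0 : (0:ℝ) < (d:ℝ) := by exact_mod_cast hd
  -- extended statistics over ℕ
  set g : ℕ → Matrix (Fin d) (Fin d) ℝ := fun s =>
    if h : s < n then ∑ e ∈ A ⟨s, h⟩, vecMulVec (φ e) (φ e) else 0 with hg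
  set V : ℕ → Matrix (Fin d) (Fin d) ℝ := fun s =>
    (lam ^ 2)⁻¹ • (1 : Matrix (Fin d) (Fin d) ℝ) + (σ ^ 2)⁻¹ • ∑ τ ∈ Finset.range s, g τ
    with hVdef
  have hgpsd : ∀ s, (g s).PosSemidef := by
    intro s
    simp only [hg]
    split
    · exact psd_sum _ _ fun e _ => psd_vecMulVec (φ e)
    · exact Matrix.PosSemidef.zero
  have hVpd : ∀ s, (V s).PosDef := by
    intro s
    simp only [hVdef]
    exact (pd_smul_one (by positivity)).add_posSemidef
      (psd_smul (by positivity) (psd_sum _ _ fun τ _ => hgpsd τ))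
  -- identification of ucbSig with V
  have hSig : ∀ t : Fin n, ucbSig lam σ φ A t = (V (t : ℕ))⁻¹ := by
    intro t
    rw [ucbSig]
    have hsum : ∑ τ ∈ Finset.Iio t, ∑ e ∈ A τ, vecMulVec (φ e) (φ e) =
        ∑ τ ∈ Finset.range (t : ℕ), g τ := by
      rw [← Nat.Iio_eq_range, ← Fin.map_valEmbedding_Iio, Finset.sum_map]
      refine Finset.sum_congr rfl fun τ hτ => ?_
      simp only [hg, Fin.valEmbedding_apply]
      rw [dif_pos τ.isLt]
    rw [hsum]
  -- z quantities
  set z : Fin n → Fin L → ℝ := fun t e => φ e ⬝ᵥ (V (t : ℕ))⁻¹.mulVec (φ e) with hzdef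
  have hzb : ∀ (t : Fin n) (e : Fin L), 0 ≤ z t e ∧ z t e ≤ lam ^ 2 := by
    intro t e
    simp only [hzdef, hVdef]
    exact quad_inv_bounds hlam
      (psd_smul (by positivity) (psd_sum _ _ fun τ _ => hgpsd τ)) (φ e) (hφ e)
  set Z : ℕ → ℝ := fun s => if h : s < n then ∑ e ∈ A ⟨s, h⟩, z ⟨s, h⟩ e else 0 with hZdef
  have hZ0 : ∀ s, 0 ≤ Z s := by
    intro s
    simp only [hZdef]
    split
    · exact Finset.sum_nonneg fun e _ => (hzb _ e).1
    · exact le_refl 0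
  have hZK : ∀ s, Z s ≤ K * lam ^ 2 := by
    intro s
    simp only [hZdef]
    split
    · rename_i h
      calc ∑ e ∈ A ⟨s, h⟩, z ⟨s, h⟩ e ≤ (A ⟨s, h⟩).card • (lam ^ 2) :=
            Finset.sum_le_card_nsmul _ _ _ fun e _ => (hzb _ e).2
        _ = (A ⟨s, h⟩).card * lam ^ 2 := by rw [nsmul_eq_mul]
        _ ≤ K * lam ^ 2 := by
            have := h𝒜 _ (hA ⟨s, h⟩)
            have : ((A ⟨s, h⟩).card : ℝ) ≤ K := by exact_mod_cast this
            nlinarith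
    · positivity
  -- determinant step
  have hdetstep : ∀ s, (V s).det * (1 + (σ ^ 2)⁻¹ * Z s) ≤ (V (s + 1)).det := by
    intro s
    have hVs : V (s + 1) = V s + (σ ^ 2)⁻¹ • g s := by
      simp only [hVdef]
      rw [Finset.sum_range_succ, smul_add, add_assoc]
    have htr : ((V s)⁻¹ * ((σ ^ 2)⁻¹ • g s)).trace = (σ ^ 2)⁻¹ * Z s := by
      rw [mul_smul_comm, Matrix.trace_smul, smul_eq_mul]
      congr 1
      simp only [hg, hZdef]
      split
      · rename_i h
        rw [Finset.mul_sum, Matrix.trace_sum]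
        exact Finset.sum_congr rfl fun e _ => trace_mul_vecMulVec _ _
      · simp
    have h := det_add_psd (hVpd s) (psd_smul (by positivity : (0:ℝ) ≤ (σ ^ 2)⁻¹) (hgpsd s))
    rw [htr] at h
    rw [hVs]
    exact h
  -- telescoping
  have htel : ∀ m, (V 0).det * ∏ i ∈ Finset.range m, (1 + (σ ^ 2)⁻¹ * Z i) ≤ (V m).det := by
    intro m
    induction m with
    | zero => simp
    | succ m ih =>
      rw [Finset.prod_range_succ, ← mul_assoc]
      have hfac : (0:ℝ) ≤ 1 + (σ ^ 2)⁻¹ * Z m := by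
        have := hZ0 m
        positivity
      calc (V 0).det * (∏ i ∈ Finset.range m, (1 + (σ ^ 2)⁻¹ * Z i)) * (1 + (σ ^ 2)⁻¹ * Z m)
          ≤ (V m).det * (1 + (σ ^ 2)⁻¹ * Z m) := mul_le_mul_of_nonneg_right ih hfac
        _ ≤ (V (m + 1)).det := hdetstep m
  have hdet0 : (V 0).det = ((lam ^ 2)⁻¹) ^ d := by
    simp only [hVdef]
    rw [Finset.range_zero, Finset.sum_empty, smul_zero, add_zero, Matrix.det_smul,
      Matrix.det_one, mul_one, Fintype.card_fin]
  -- trace bound at time n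
  have htrV : (V n).trace ≤ d * (lam ^ 2)⁻¹ + (σ ^ 2)⁻¹ * (n * K) := by
    simp only [hVdef]
    rw [Matrix.trace_add, Matrix.trace_smul, Matrix.trace_smul, Matrix.trace_one,
      Matrix.trace_sum]
    have hgtr : ∀ τ ∈ Finset.range n, (g τ).trace ≤ (K : ℝ) := by
      intro τ hτ
      simp only [hg]
      rw [dif_pos (Finset.mem_range.mp hτ)]
      rw [Matrix.trace_sum]
      calc ∑ e ∈ A ⟨τ, Finset.mem_range.mp hτ⟩, (vecMulVec (φ e) (φ e)).trace
          ≤ ∑ e ∈ A ⟨τ, Finset.mem_range.mp hτ⟩, (1:ℝ) := by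
            refine Finset.sum_le_sum fun e _ => ?_
            rw [trace_vecMulVec]
            exact dot_self_le_one (hφ e)
        _ = (A ⟨τ, Finset.mem_range.mp hτ⟩).card := by rw [Finset.sum_const, nsmul_eq_mul, mul_one]
        _ ≤ (K : ℝ) := by exact_mod_cast h𝒜 _ (hA _)
    have hsum : ∑ τ ∈ Finset.range n, (g τ).trace ≤ (n : ℝ) * K := by
      calc ∑ τ ∈ Finset.range n, (g τ).trace ≤ ∑ τ ∈ Finset.range n, (K : ℝ) :=
            Finset.sum_le_sum hgtr
        _ = (n : ℝ) * K := by rw [Finset.sum_const, Finset.card_range, nsmul_eq_mul]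
    simp only [smul_eq_mul, Fintype.card_fin]
    have : (0:ℝ) ≤ (σ ^ 2)⁻¹ := by positivity
    nlinarith [hsum]
  -- the constant C
  set C : ℝ := 1 + n * K * lam ^ 2 / (d * σ ^ 2) with hCdef
  have hC1 : (1:ℝ) ≤ C := by
    simp only [hCdef]
    have : (0:ℝ) ≤ (n:ℝ) * K * lam ^ 2 / (d * σ ^ 2) := by positivity
    linarith
  -- product bound : ∏ ≤ C ^ d
  have hprodC : ∏ i ∈ Finset.range n, (1 + (σ ^ 2)⁻¹ * Z i) ≤ C ^ d := by
    have h1 : ((lam ^ 2)⁻¹) ^ d * ∏ i ∈ Finset.range n, (1 + (σ ^ 2)⁻¹ * Z i) ≤ (V n).det := by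
      rw [← hdet0]; exact htel n
    have htrlow : (0:ℝ) ≤ (V n).trace := trace_psd_nonneg (hVpd n).posSemidef
    have h2 : (V n).det ≤ ((V n).trace / d) ^ d := det_le_pow_trace hd (hVpd n).posSemidef
    have h3 : ((V n).trace / d) ^ d ≤ ((d * (lam ^ 2)⁻¹ + (σ ^ 2)⁻¹ * (n * K)) / d) ^ d := by
      refine pow_le_pow_left₀ (by positivity) ?_ d
      gcongr
    have hkey : (lam ^ 2) ^ d * ((d * (lam ^ 2)⁻¹ + (σ ^ 2)⁻¹ * (n * K)) / d) ^ d = C ^ d := by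
      rw [← mul_pow]
      congr 1
      simp only [hCdef]
      field_simp
    have h4 : ∏ i ∈ Finset.range n, (1 + (σ ^ 2)⁻¹ * Z i) ≤ (lam ^ 2) ^ d * (V n).det := by
      have hls : (0:ℝ) < ((lam ^ 2)⁻¹) ^ d := by positivity
      have := mul_le_mul_of_nonneg_left h1 (le_of_lt (by positivity : (0:ℝ) < (lam ^ 2) ^ d))
      rwa [← mul_assoc, ← mul_pow, mul_inv_cancel₀ hl2.ne', one_pow, one_mul] at this
    calc ∏ i ∈ Finset.range n, (1 + (σ ^ 2)⁻¹ * Z i) ≤ (lam ^ 2) ^ d * (V n).det := h4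
      _ ≤ (lam ^ 2) ^ d * ((V n).trace / d) ^ d := mul_le_mul_of_nonneg_left h2 (by positivity)
      _ ≤ (lam ^ 2) ^ d * ((d * (lam ^ 2)⁻¹ + (σ ^ 2)⁻¹ * (n * K)) / d) ^ d :=
          mul_le_mul_of_nonneg_left h3 (by positivity)
      _ = C ^ d := hkey
  -- log bound
  have hfac1 : ∀ i, (1:ℝ) ≤ 1 + (σ ^ 2)⁻¹ * Z i := by
    intro i
    have := hZ0 i
    nlinarith [hZ0 i, inv_nonneg.mpr hσ2.le]
  have hlogsum : ∑ i ∈ Finset.range n, Real.log (1 + (σ ^ 2)⁻¹ * Z i) ≤ d * Real.log C := by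
    have hpos : ∀ i ∈ Finset.range n, (0:ℝ) < 1 + (σ ^ 2)⁻¹ * Z i :=
      fun i _ => lt_of_lt_of_le one_pos (hfac1 i)
    have hprodpos : (0:ℝ) < ∏ i ∈ Finset.range n, (1 + (σ ^ 2)⁻¹ * Z i) :=
      Finset.prod_pos hpos
    have hlog := Real.log_le_log hprodpos hprodC
    rw [Real.log_prod (fun i hi => (hpos i hi).ne'), Real.log_pow] at hlog
    exact hlog
  -- concavity : bound on ∑ Z
  have hLgpos : 0 < Real.log (1 + lam ^ 2 / σ ^ 2) := by
    refine Real.log_pos ?_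
    have : (0:ℝ) < lam ^ 2 / σ ^ 2 := by positivity
    linarith
  have hlogC0 : 0 ≤ Real.log C := Real.log_nonneg hC1
  have hsumZ : (∑ i ∈ Finset.range n, Z i) * Real.log (1 + lam ^ 2 / σ ^ 2) ≤
      K * lam ^ 2 * (d * Real.log C) := by
    have hKl2 : (0:ℝ) < (K:ℝ) * lam ^ 2 := by positivity
    have hsZ0 : 0 ≤ ∑ i ∈ Finset.range n, Z i :=
      Finset.sum_nonneg fun i _ => hZ0 i
    have hmono : Real.log (1 + lam ^ 2 / σ ^ 2) ≤ Real.log (1 + K * lam ^ 2 / σ ^ 2) := by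
      refine Real.log_le_log (by positivity) ?_
      have : lam ^ 2 / σ ^ 2 ≤ K * lam ^ 2 / σ ^ 2 := by
        gcongr
        have hK1 : (1:ℝ) ≤ (K:ℝ) := by exact_mod_cast hK
        nlinarith [hK1, hl2]
      linarith
    calc (∑ i ∈ Finset.range n, Z i) * Real.log (1 + lam ^ 2 / σ ^ 2)
        ≤ (∑ i ∈ Finset.range n, Z i) * Real.log (1 + K * lam ^ 2 / σ ^ 2) :=
          mul_le_mul_of_nonneg_left hmono hsZ0
      _ = ∑ i ∈ Finset.range n, Z i * Real.log (1 + K * lam ^ 2 / σ ^ 2) := by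
          rw [Finset.sum_mul]
      _ ≤ ∑ i ∈ Finset.range n, K * lam ^ 2 * Real.log (1 + (σ ^ 2)⁻¹ * Z i) := by
          refine Finset.sum_le_sum fun i _ => ?_
          have h := concave_log_bound hKl2 hσ2 (hZ0 i) (hZK i)
          have heq : 1 + Z i / σ ^ 2 = 1 + (σ ^ 2)⁻¹ * Z i := by ring
          rwa [heq] at h
      _ = K * lam ^ 2 * ∑ i ∈ Finset.range n, Real.log (1 + (σ ^ 2)⁻¹ * Z i) := by
          rw [Finset.mul_sum]
      _ ≤ K * lam ^ 2 * (d * Real.log C) :=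
          mul_le_mul_of_nonneg_left hlogsum hKl2.le
  have hsZbound : ∑ i ∈ Finset.range n, Z i ≤
      K * lam ^ 2 * (d * Real.log C) / Real.log (1 + lam ^ 2 / σ ^ 2) := by
    rw [le_div_iff₀ hLgpos]
    exact hsumZ
  -- Cauchy-Schwarz
  set T : ℝ := ∑ t : Fin n, ∑ e ∈ A t, Real.sqrt (z t e) with hTdef
  have hT0 : 0 ≤ T := by
    refine Finset.sum_nonneg fun t _ => Finset.sum_nonneg fun e _ => Real.sqrt_nonneg _
  have hzZ : ∑ t : Fin n, ∑ e ∈ A t, z t e = ∑ i ∈ Finset.range n, Z i := by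
    rw [← Fin.sum_univ_eq_sum_range (fun i => Z i) n]
    refine Finset.sum_congr rfl fun t _ => ?_
    simp only [hZdef]
    rw [dif_pos t.isLt]
  have hcardA : ∑ t : Fin n, ((A t).card : ℝ) ≤ (n : ℝ) * K := by
    calc ∑ t : Fin n, ((A t).card : ℝ) ≤ ∑ _t : Fin n, (K : ℝ) :=
          Finset.sum_le_sum fun t _ => by exact_mod_cast h𝒜 _ (hA t)
      _ = (n : ℝ) * K := by rw [Finset.sum_const, Finset.card_univ, Fintype.card_fin,
            nsmul_eq_mul]
  have hT2 : T ^ 2 ≤ (n * K) * ∑ i ∈ Finset.range n, Z i := by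
    have hcs := Finset.sum_mul_sq_le_sq_mul_sq (Finset.univ.sigma fun t : Fin n => A t)
      (fun p => Real.sqrt (z p.1 p.2)) (fun _ => (1:ℝ))
    simp only [mul_one, one_pow] at hcs
    have hTs : T = ∑ p ∈ Finset.univ.sigma (fun t : Fin n => A t), Real.sqrt (z p.1 p.2) := by
      rw [hTdef, Finset.sum_sigma]
    have hsq : ∑ p ∈ Finset.univ.sigma (fun t : Fin n => A t), Real.sqrt (z p.1 p.2) ^ 2 =
        ∑ i ∈ Finset.range n, Z i := by
      rw [← hzZ, Finset.sum_sigma]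
      exact Finset.sum_congr rfl fun t _ => Finset.sum_congr rfl fun e _ =>
        Real.sq_sqrt (hzb t e).1
    have hcard : ∑ _p ∈ Finset.univ.sigma (fun t : Fin n => A t), (1:ℝ) ≤ (n:ℝ) * K := by
      rw [Finset.sum_const, nsmul_eq_mul, mul_one, Finset.card_sigma]
      calc ((∑ t : Fin n, (A t).card : ℕ) : ℝ) = ∑ t : Fin n, ((A t).card : ℝ) := by
            push_cast; ring
        _ ≤ (n : ℝ) * K := hcardA
    have hsZ0 : 0 ≤ ∑ i ∈ Finset.range n, Z i :=
      Finset.sum_nonneg fun i _ => hZ0 i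
    calc T ^ 2 ≤ (∑ p ∈ Finset.univ.sigma (fun t : Fin n => A t), Real.sqrt (z p.1 p.2) ^ 2) *
          (∑ _p ∈ Finset.univ.sigma (fun t : Fin n => A t), (1:ℝ)) := by
          rw [hTs]; exact hcs
      _ ≤ (∑ i ∈ Finset.range n, Z i) * ((n:ℝ) * K) := by
          rw [hsq]
          exact mul_le_mul_of_nonneg_left hcard hsZ0
      _ = (n * K) * ∑ i ∈ Finset.range n, Z i := by ring
  -- final bound on T
  have hTfin : T ≤ K * lam * Real.sqrt (d * n * Real.log C / Real.log (1 + lam ^ 2 / σ ^ 2)) := by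
    have hX0 : 0 ≤ (d:ℝ) * n * Real.log C / Real.log (1 + lam ^ 2 / σ ^ 2) := by positivity
    have hQ : T ^ 2 ≤ (K * lam) ^ 2 * (d * n * Real.log C / Real.log (1 + lam ^ 2 / σ ^ 2)) := by
      calc T ^ 2 ≤ (n * K) * ∑ i ∈ Finset.range n, Z i := hT2
        _ ≤ (n * K) * (K * lam ^ 2 * (d * Real.log C) / Real.log (1 + lam ^ 2 / σ ^ 2)) := by
            refine mul_le_mul_of_nonneg_left hsZbound (by positivity)
        _ = (K * lam) ^ 2 * (d * n * Real.log C / Real.log (1 + lam ^ 2 / σ ^ 2)) := by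
            field_simp
    calc T = Real.sqrt (T ^ 2) := (Real.sqrt_sq hT0).symm
      _ ≤ Real.sqrt ((K * lam) ^ 2 * (d * n * Real.log C / Real.log (1 + lam ^ 2 / σ ^ 2))) :=
          Real.sqrt_le_sqrt hQ
      _ = K * lam * Real.sqrt (d * n * Real.log C / Real.log (1 + lam ^ 2 / σ ^ 2)) := by
          rw [Real.sqrt_mul (sq_nonneg _), Real.sqrt_sq (by positivity)]
  -- regret decomposition
  have hstep : ∀ t : Fin n,
      (∑ e ∈ Aopt, φ e ⬝ᵥ θs) - (1 - γ)⁻¹ * ∑ e ∈ A t, φ e ⬝ᵥ θs ≤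
        (1 - γ)⁻¹ * (2 * c * ∑ e ∈ A t, Real.sqrt (z t e)) := by
    intro t
    have hq : ∀ e : Fin L, φ e ⬝ᵥ (ucbSig lam σ φ A t).mulVec (φ e) = z t e := by
      intro e
      rw [hSig t]
    have h1 : ∑ e ∈ Aopt, φ e ⬝ᵥ θs ≤ ∑ e ∈ Aopt, ucbWeight lam σ c φ A w t e := by
      refine Finset.sum_le_sum fun e _ => ?_
      have h := (abs_le.mp (hconf t e)).1
      rw [dotProduct_sub] at h
      rw [ucbWeight]
      linarith
    have h3 : ∑ e ∈ A t, ucbWeight lam σ c φ A w t e ≤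
        (∑ e ∈ A t, φ e ⬝ᵥ θs) + 2 * c * ∑ e ∈ A t, Real.sqrt (z t e) := by
      have hb : ∀ e ∈ A t, ucbWeight lam σ c φ A w t e ≤
          φ e ⬝ᵥ θs + 2 * c * Real.sqrt (z t e) := by
        intro e _
        have h := (abs_le.mp (hconf t e)).2
        rw [dotProduct_sub] at h
        rw [ucbWeight, hq e] at *
        linarith
      calc ∑ e ∈ A t, ucbWeight lam σ c φ A w t e ≤
            ∑ e ∈ A t, (φ e ⬝ᵥ θs + 2 * c * Real.sqrt (z t e)) := Finset.sum_le_sum hb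
        _ = (∑ e ∈ A t, φ e ⬝ᵥ θs) + 2 * c * ∑ e ∈ A t, Real.sqrt (z t e) := by
            rw [Finset.sum_add_distrib, Finset.mul_sum]
    have hinv0 : (0:ℝ) ≤ (1 - γ)⁻¹ := by positivity
    have h2 : ∑ e ∈ Aopt, ucbWeight lam σ c φ A w t e ≤
        (1 - γ)⁻¹ * ∑ e ∈ A t, ucbWeight lam σ c φ A w t e := by
      have h := mul_le_mul_of_nonneg_left (hopt t Aopt hAopt) hinv0
      rwa [← mul_assoc, inv_mul_cancel₀ h1γ.ne', one_mul] at h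
    have h5 := mul_le_mul_of_nonneg_left h3 hinv0
    rw [mul_add] at h5
    linarith
  -- final assembly
  calc ∑ t, ((∑ e ∈ Aopt, φ e ⬝ᵥ θs) - (1 - γ)⁻¹ * ∑ e ∈ A t, φ e ⬝ᵥ θs)
      ≤ ∑ t : Fin n, (1 - γ)⁻¹ * (2 * c * ∑ e ∈ A t, Real.sqrt (z t e)) :=
        Finset.sum_le_sum fun t _ => hstep t
    _ = (1 - γ)⁻¹ * (2 * c) * T := by
        rw [hTdef, Finset.mul_sum]
        refine Finset.sum_congr rfl fun t _ => by ring
    _ ≤ (1 - γ)⁻¹ * (2 * c) *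
        (K * lam * Real.sqrt (d * n * Real.log C / Real.log (1 + lam ^ 2 / σ ^ 2))) := by
        refine mul_le_mul_of_nonneg_left hTfin (by positivity)
    _ = 2 * c * K * lam / (1 - γ) *
        Real.sqrt (d * n * Real.log C / Real.log (1 + lam ^ 2 / σ ^ 2)) := by
        rw [div_eq_mul_inv]
        ring
end
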